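/- arXiv:1906.09465 — 10 statements merged into one kernel-verified Lean document; each statement's English description precedes it below -/
import Mathlib

section
/- Every function f : F^n → F either has no 1-canalizing variables, or can be written in layered canalizing form: there exist r ≥ 1, a partition of the n variables into disjoint layer blocks L_1, …, L_r of sizes k_1, …, k_r together with the remaining n − d variables (d = k_1 + ⋯ + k_r), nonempty proper canalizing input sets S_{i,j} ⊆ F, constants B_1, …, B_r ∈ F with B_r ≠ 0, and a core function P_C of the remaining n − d variables having no 1-canalizing variables, such that f(x) = M_1(M_2(⋯(M_{r−1}(M_r · P_C + B_r) + B_{r−1})⋯) + B_2) + B_1, where M_i = ∏_{j=1}^{k_i} Q̃_{S_{i,j}}(x_{i,j}) is the product of complement indicators over the variables in layer L_i, and each variable appears in exactly one of M_1, …, M_r, P_C. -/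
open Finset

/-- Indicator function of the complement of `S`: `Qt S x = 1` if `x ∉ S`, `0` if `x ∈ S`. -/
def Qt {F : Type*} [Fintype F] [DecidableEq F] [Zero F] [One F] (S : Finset F) (x : F) : F :=
  if x ∈ S then 0 else 1

/-- `g` actually depends on (is essential in) its `i`-th variable. -/
def DependsOnVar {F : Type*} (n : ℕ) (g : (Fin n → F) → F) (i : Fin n) : Prop :=
  ∃ x y : Fin n → F, (∀ j, j ≠ i → x j = y j) ∧ g x ≠ g y

/-- `g` is canalizing in its `i`-th variable with canalizing input set `S`
(a nonempty proper subset of `F`) and canalizing output `b`. -/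
def Canalizing {F : Type*} [Fintype F] [DecidableEq F] (n : ℕ) (g : (Fin n → F) → F)
    (i : Fin n) (S : Finset F) (b : F) : Prop :=
  S.Nonempty ∧ S ≠ Finset.univ ∧ ∀ x : Fin n → F, x i ∈ S → g x = b

/-- `f` is 1-canalizing in its `i`-th variable with canalizing input set `S`
(a nonempty proper subset of `F`) and canalizing output `b`: `f = b` whenever `x i ∈ S`,
and on `x i ∉ S` the value of `f` is given by a single function of the remaining variables
which is not identically `b`. -/
def OneCanalizing {F : Type*} [Fintype F] [DecidableEq F] (n : ℕ) (f : (Fin n → F) → F)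
    (i : Fin n) (S : Finset F) (b : F) : Prop :=
  S.Nonempty ∧ S ≠ Finset.univ ∧
  (∀ x : Fin n → F, x i ∈ S → f x = b) ∧
  (∀ x y : Fin n → F, x i ∉ S → y i ∉ S → (∀ j, j ≠ i → x j = y j) → f x = f y) ∧
  (∃ x : Fin n → F, x i ∉ S ∧ f x ≠ b)

/-- Nested evaluation `M₁(M₂(⋯(M_r · P + B_r)⋯) + B₂) + B₁`. -/
def nestEval {F : Type*} [Mul F] [Add F] : List (F × F) → F → F
  | [], P => P
  | (m, b) :: t, P => m * nestEval t P + b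

/-- Layered canalizing form data for a function of `n` variables with `r ≥ 1` layers:
pairwise disjoint layer blocks, nonempty proper canalizing input sets for the
layer variables, layer constants `B` with the last one nonzero, and a core function
`P_C` of the remaining variables having no 1-canalizing variables. -/
structure LayeredForm (F : Type*) [Field F] [Fintype F] [DecidableEq F] (n r : ℕ) where
  hr : 0 < r
  layer : Fin r → Finset (Fin n)
  disj : ∀ i j : Fin r, i ≠ j → Disjoint (layer i) (layer j)
  S : Fin n → Finset F
  Sne : ∀ i : Fin r, ∀ v ∈ layer i, (S v).Nonempty
  Spr : ∀ i : Fin r, ∀ v ∈ layer i, S v ≠ Finset.univ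
  B : Fin r → F
  Blast : B ⟨r - 1, Nat.sub_lt hr Nat.one_pos⟩ ≠ 0
  PC : (Fin n → F) → F
  PCvars : ∀ i : Fin r, ∀ v ∈ layer i, ¬ DependsOnVar n PC v
  PCnc : ¬ ∃ (v : Fin n) (S' : Finset F) (b : F), OneCanalizing n PC v S' b

/-- The product `M_i = ∏_{v ∈ L_i} Q̃_{S_v}(x_v)` over the `i`-th layer. -/
def LayeredForm.M {F : Type*} [Field F] [Fintype F] [DecidableEq F] {n r : ℕ}
    (L : LayeredForm F n r) (i : Fin r) (x : Fin n → F) : F :=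
  ∏ v ∈ L.layer i, Qt (L.S v) (x v)

/-- The function determined by a layered canalizing form:
`f(x) = M₁(M₂(⋯(M_r · P_C + B_r)⋯) + B₂) + B₁`. -/
def LayeredForm.eval {F : Type*} [Field F] [Fintype F] [DecidableEq F] {n r : ℕ}
    (L : LayeredForm F n r) (x : Fin n → F) : F :=
  nestEval (List.ofFn fun i => (L.M i x, L.B i)) (L.PC x)

/-- The number of state-space transitions changed when the input `s` of `f`
is replaced by the constant `a` (edge deletion when `a = 0`). -/
def chCount {F : Type*} [Fintype F] [DecidableEq F] {n : ℕ}
    (f : (Fin n → F) → F) (s : Fin n) (a : F) : ℕ :=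
  (Finset.univ.filter fun x : Fin n → F => f (Function.update x s a) ≠ f x).card
section AuxStmt0

variable {F : Type*} [Field F] [Fintype F] [DecidableEq F] {n : ℕ}

/-- Adding a constant preserves the absence of 1-canalizing variables. -/
lemma shift_nc (g : (Fin n → F) → F) (c : F)
    (hg : ¬ ∃ (i : Fin n) (S : Finset F) (b : F), OneCanalizing n g i S b) :
    ¬ ∃ (i : Fin n) (S : Finset F) (b : F), OneCanalizing n (fun x => g x + c) i S b := by
  rintro ⟨i, S, b, h1, h2, h3, h4, h5⟩
  refine hg ⟨i, S, b - c, h1, h2, ?_, ?_, ?_⟩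
  · intro x hx
    have h' : g x + c = b := h3 x hx
    exact eq_sub_of_add_eq h'
  · intro x y hx hy hxy
    have := h4 x y hx hy hxy
    have h' : g x + c = g y + c := this
    exact add_right_cancel h'
  · obtain ⟨x, hx, hne⟩ := h5
    refine ⟨x, hx, fun h => hne ?_⟩
    show g x + c = b
    rw [h]; ring

set_option linter.unusedSectionVars false in
/-- A 1-canalizing variable is essential. -/
lemma dep_of_oc (f : (Fin n → F) → F) (i : Fin n) (S : Finset F) (b : F)
    (h : OneCanalizing n f i S b) : DependsOnVar n f i := by
  obtain ⟨hne, hpr, h3, h4, x, hx, hxb⟩ := h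
  obtain ⟨s, hs⟩ := hne
  refine ⟨x, Function.update x i s, fun j hj => (Function.update_of_ne hj s x).symm, ?_⟩
  rw [h3 (Function.update x i s) (by simp [hs])]
  exact hxb

/-- Key strengthened induction lemma. -/
lemma key_layered (n : ℕ) (m : ℕ) (f : (Fin n → F) → F)
    (hm : (@Finset.filter _ (fun v => DependsOnVar n f v) (Classical.decPred _)
      Finset.univ).card ≤ m) :
    (¬ ∃ (i : Fin n) (S : Finset F) (b : F), OneCanalizing n f i S b) ∨
    ∃ (r : ℕ) (L : LayeredForm F n r), f = L.eval ∧
      (∀ k, ∀ v ∈ L.layer k, DependsOnVar n f v) ∧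
      (∀ v, ¬ DependsOnVar n f v → ¬ DependsOnVar n L.PC v) := by
  induction m generalizing f with
  | zero =>
    by_cases hc : ∃ (i : Fin n) (S : Finset F) (b : F), OneCanalizing n f i S b
    · obtain ⟨i, S₀, b, hoc⟩ := hc
      have hdepi := dep_of_oc f i S₀ b hoc
      exfalso
      have hi : i ∈ @Finset.filter _ (fun v => DependsOnVar n f v) (Classical.decPred _)
          Finset.univ := by
        simp only [Finset.mem_filter, Finset.mem_univ, true_and]; exact hdepi
      have := Finset.card_pos.mpr ⟨i, hi⟩
      omega
    · exact Or.inl hc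
  | succ m ih =>
    by_cases hc : ∃ (i : Fin n) (S : Finset F) (b : F), OneCanalizing n f i S b
    swap
    · exact Or.inl hc
    obtain ⟨i, S₀, b, hS₀ne, hS₀pr, h3, h4, h5⟩ := hc
    have hdepi : DependsOnVar n f i := dep_of_oc f i S₀ b ⟨hS₀ne, hS₀pr, h3, h4, h5⟩
    obtain ⟨c, hc0⟩ : ∃ c, c ∉ S₀ := by
      by_contra hno
      push_neg at hno
      exact hS₀pr (Finset.eq_univ_iff_forall.mpr hno)
    set PC : (Fin n → F) → F := fun x => f (Function.update x i c) + (-b) with hPCdef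
    have hupd : ∀ x y : Fin n → F, (∀ j, j ≠ i → x j = y j) →
        Function.update x i c = Function.update y i c := by
      intro x y h
      funext j
      by_cases hj : j = i
      · subst hj; simp
      · rw [Function.update_of_ne hj, Function.update_of_ne hj]; exact h j hj
    have hPCconst : ∀ x y : Fin n → F, (∀ j, j ≠ i → x j = y j) → PC x = PC y := by
      intro x y h
      show f (Function.update x i c) + (-b) = f (Function.update y i c) + (-b)
      rw [hupd x y h]
    have hndPCi : ¬ DependsOnVar n PC i := by
      rintro ⟨x, y, hxy, hne⟩; exact hne (hPCconst x y hxy)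
    have hdep_trans : ∀ v, DependsOnVar n PC v → DependsOnVar n f v := by
      rintro v ⟨x, y, hxy, hne⟩
      refine ⟨Function.update x i c, Function.update y i c, ?_, ?_⟩
      · intro j hj
        by_cases hji : j = i
        · subst hji; simp
        · rw [Function.update_of_ne hji, Function.update_of_ne hji]; exact hxy j hj
      · intro h
        exact hne (show f (Function.update x i c) + (-b)
          = f (Function.update y i c) + (-b) by rw [h])
    have hsub : (@Finset.filter _ (fun v => DependsOnVar n PC v) (Classical.decPred _)
        Finset.univ) ⊆ (@Finset.filter _ (fun v => DependsOnVar n f v) (Classical.decPred _)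
        Finset.univ) := by
      intro v hv
      simp only [Finset.mem_filter, Finset.mem_univ, true_and] at hv ⊢
      exact hdep_trans v hv
    have hss := (Finset.ssubset_iff_of_subset hsub).mpr
      ⟨i, by simp only [Finset.mem_filter, Finset.mem_univ, true_and]; exact hdepi,
        by simp only [Finset.mem_filter, Finset.mem_univ, true_and]; exact hndPCi⟩
    have hcard := Finset.card_lt_card hss
    have hmle : (@Finset.filter _ (fun v => DependsOnVar n PC v) (Classical.decPred _)
        Finset.univ).card ≤ m := by omega
    have hrec : ∃ (r : ℕ) (L' : LayeredForm F n r), PC = L'.eval ∧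
        (∀ k, ∀ v ∈ L'.layer k, DependsOnVar n PC v) ∧
        (∀ v, ¬ DependsOnVar n PC v → ¬ DependsOnVar n L'.PC v) := by
      rcases ih PC hmle with hnc | hgood
      · refine ⟨1, {
          hr := one_pos
          layer := fun _ => ∅
          disj := fun a b h => absurd (Subsingleton.elim a b) h
          S := fun _ => ∅
          Sne := by simp
          Spr := by simp
          B := fun _ => 1
          Blast := one_ne_zero
          PC := fun x => PC x + (-1)
          PCvars := by simp
          PCnc := shift_nc PC (-1) hnc }, ?_, by simp, ?_⟩
        · funext x
          simp [LayeredForm.eval, LayeredForm.M, nestEval, List.ofFn_succ, List.ofFn_zero]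
        · intro v hv
          rintro ⟨x, y, hxy, hne⟩
          exact hv ⟨x, y, hxy,
            fun he => hne (show PC x + (-1) = PC y + (-1) by rw [he])⟩
      · exact hgood
    obtain ⟨r', L', hPCeq, hlay', hcore'⟩ := hrec
    have hinotin : ∀ k, i ∉ L'.layer k := fun k hk => hndPCi (hlay' k i hk)
    have hvne : ∀ k, ∀ v ∈ L'.layer k, v ≠ i := by
      intro k v hv hvi
      exact hinotin k (hvi ▸ hv)
    refine Or.inr ⟨r' + 1, {
      hr := Nat.succ_pos _
      layer := Fin.cases {i} L'.layer
      disj := ?_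
      S := Function.update L'.S i S₀
      Sne := ?_
      Spr := ?_
      B := Fin.cases b L'.B
      Blast := ?_
      PC := L'.PC
      PCvars := ?_
      PCnc := L'.PCnc }, ?_, ?_, ?_⟩
    · -- disj
      intro a b' hab
      rcases Fin.eq_zero_or_eq_succ a with rfl | ⟨k, rfl⟩ <;>
        rcases Fin.eq_zero_or_eq_succ b' with rfl | ⟨l, rfl⟩
      · exact absurd rfl hab
      · simp only [Fin.cases_zero, Fin.cases_succ]
        exact Finset.disjoint_singleton_left.mpr (hinotin l)
      · simp only [Fin.cases_zero, Fin.cases_succ]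
        exact Finset.disjoint_singleton_right.mpr (hinotin k)
      · simp only [Fin.cases_succ]
        exact L'.disj k l (fun h => hab (congrArg Fin.succ h))
    · -- Sne
      intro a v hv
      rcases Fin.eq_zero_or_eq_succ a with rfl | ⟨k, rfl⟩
      · simp only [Fin.cases_zero, Finset.mem_singleton] at hv
        subst hv
        rw [Function.update_self]
        exact hS₀ne
      · simp only [Fin.cases_succ] at hv
        rw [Function.update_of_ne (hvne k v hv)]
        exact L'.Sne k v hv
    · -- Spr
      intro a v hv
      rcases Fin.eq_zero_or_eq_succ a with rfl | ⟨k, rfl⟩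
      · simp only [Fin.cases_zero, Finset.mem_singleton] at hv
        subst hv
        rw [Function.update_self]
        exact hS₀pr
      · simp only [Fin.cases_succ] at hv
        rw [Function.update_of_ne (hvne k v hv)]
        exact L'.Spr k v hv
    · -- Blast
      have h1 : (⟨r' + 1 - 1, Nat.sub_lt (Nat.succ_pos r') Nat.one_pos⟩ : Fin (r' + 1)) =
          Fin.succ ⟨r' - 1, Nat.sub_lt L'.hr Nat.one_pos⟩ := by
        have := L'.hr
        apply Fin.ext
        simp only [Fin.val_succ]
        omega
      rw [h1]
      simp only [Fin.cases_succ]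
      exact L'.Blast
    · -- PCvars
      intro a v hv
      rcases Fin.eq_zero_or_eq_succ a with rfl | ⟨k, rfl⟩
      · simp only [Fin.cases_zero, Finset.mem_singleton] at hv
        exact hv ▸ hcore' i hndPCi
      · simp only [Fin.cases_succ] at hv
        exact L'.PCvars k v hv
    · -- f = eval
      funext x
      dsimp only [LayeredForm.eval, LayeredForm.M]
      rw [List.ofFn_succ]
      simp only [Fin.cases_zero, Fin.cases_succ, nestEval]
      rw [Finset.prod_singleton, Function.update_self]
      have htail : (List.ofFn fun k : Fin r' =>
          ((∏ v ∈ L'.layer k, Qt (Function.update L'.S i S₀ v) (x v)), L'.B k)) =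
          List.ofFn fun k => (L'.M k x, L'.B k) := by
        congr 1
        funext k
        congr 1
        exact Finset.prod_congr rfl fun v hv => by
          rw [Function.update_of_ne (hvne k v hv)]
      rw [htail]
      have hne2 : nestEval (List.ofFn fun k : Fin r' => (L'.M k x, L'.B k)) (L'.PC x)
          = PC x := by
        rw [hPCeq]; rfl
      rw [hne2]
      by_cases hx : x i ∈ S₀
      · rw [h3 x hx]
        simp [Qt, hx]
      · have hq : Qt S₀ (x i) = 1 := by simp [Qt, hx]
        rw [hq, one_mul]
        have hfx : f x = f (Function.update x i c) :=
          h4 x (Function.update x i c) hx (by simp [hc0])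
            (fun j hj => (Function.update_of_ne hj c x).symm)
        rw [hfx]
        show f (Function.update x i c) = f (Function.update x i c) + (-b) + b
        ring
    · -- layer vars are essential in f
      intro k v hv
      dsimp only at hv
      rcases Fin.eq_zero_or_eq_succ k with rfl | ⟨l, rfl⟩
      · simp only [Fin.cases_zero, Finset.mem_singleton] at hv
        subst hv
        exact hdepi
      · simp only [Fin.cases_succ] at hv
        exact hdep_trans v (hlay' l v hv)
    · -- inessential variables of f are inessential in the core
      intro v hv
      dsimp only
      exact hcore' v (fun h => hv (hdep_trans v h))

end AuxStmt0

/-- Every function either has no 1-canalizing variables, or can be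
written in layered canalizing form. -/
theorem stmt0 {F : Type*} [Field F] [Fintype F] [DecidableEq F] (n : ℕ)
    (f : (Fin n → F) → F) :
    (¬ ∃ (i : Fin n) (S : Finset F) (b : F), OneCanalizing n f i S b) ∨
      ∃ (r : ℕ) (L : LayeredForm F n r), f = L.eval := by
  rcases key_layered n _ f le_rfl with h | ⟨r, L, heq, _, _⟩
  · exact Or.inl h
  · exact Or.inr ⟨r, L, heq⟩
end

section
/- Let f : F^n → F be 1-canalizing in each of the distinct variables x_{i_1}, …, x_{i_k} (k ≥ 1), with canalizing input sets S_1, …, S_k and canalizing outputs b_1, …, b_k respectively, where n ≥ 2 or k < n so that the canalizing regions overlap appropriately. Then b_1 = b_2 = ⋯ = b_k =: B, and there exists a function g of the remaining n − k variables such that f(x) = (∏_{j=1}^{k} Q̃_{S_j}(x_{i_j})) · g(x_{other}) + B for all x ∈ F^n. -/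
open Finset

noncomputable def patchOn {F : Type*} {n k : ℕ} (idx : Fin k → Fin n) (a : Fin k → F)
    (T : Finset (Fin k)) (x : Fin n → F) : Fin n → F :=
  fun v => match Function.partialInv idx v with
    | some j => if j ∈ T then a j else x v
    | none => x v

theorem patchOn_empty {F : Type*} {n k : ℕ} (idx : Fin k → Fin n) (a : Fin k → F)
    (x : Fin n → F) : patchOn idx a (∅ : Finset (Fin k)) x = x := by
  funext v
  unfold patchOn
  cases Function.partialInv idx v <;> simp

theorem patchOn_idx {F : Type*} {n k : ℕ} {idx : Fin k → Fin n} (hinj : Function.Injective idx)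
    (a : Fin k → F) (T : Finset (Fin k)) (x : Fin n → F) (j : Fin k) :
    patchOn idx a T x (idx j) = if j ∈ T then a j else x (idx j) := by
  unfold patchOn
  rw [Function.partialInv_left hinj]

theorem patchOn_insert {F : Type*} {n k : ℕ} {idx : Fin k → Fin n}
    (hinj : Function.Injective idx) (a : Fin k → F) (T : Finset (Fin k)) (x : Fin n → F)
    (j : Fin k) (hj : j ∉ T) :
    patchOn idx a (insert j T) x = Function.update (patchOn idx a T x) (idx j) (a j) := by
  classical
  funext v
  rcases eq_or_ne v (idx j) with rfl | hv
  · rw [Function.update_self, patchOn_idx hinj, if_pos (Finset.mem_insert_self j T)]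
  · rw [Function.update_of_ne hv]
    unfold patchOn
    cases h : Function.partialInv idx v with
    | none => rfl
    | some j' =>
      have hj' : idx j' = v := (Function.partialInv_of_injective hinj j' v).1 h
      have hne : j' ≠ j := by rintro rfl; exact hv hj'.symm
      simp [Finset.mem_insert, hne]

/-- If `f` is 1-canalizing in `k` distinct variables, then all the canalizing
outputs coincide with a common value `B`, and `f = (∏ Q̃_{S_j}(x_{i_j})) · g + B` for a single
function `g` of the remaining variables. -/
theorem stmt3 {F : Type*} [Field F] [Fintype F] [DecidableEq F] (n k : ℕ)
    (hk : 1 ≤ k) (hnk : 2 ≤ n ∨ k < n)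
    (f : (Fin n → F) → F) (idx : Fin k → Fin n) (hinj : Function.Injective idx)
    (S : Fin k → Finset F) (b : Fin k → F)
    (hcan : ∀ j : Fin k, OneCanalizing n f (idx j) (S j) (b j)) :
    ∃ B : F, (∀ j : Fin k, b j = B) ∧
      ∃ g : (Fin n → F) → F,
        (∀ x y : Fin n → F, (∀ v : Fin n, (∀ j : Fin k, idx j ≠ v) → x v = y v) → g x = g y) ∧
        ∀ x : Fin n → F, f x = (∏ j : Fin k, Qt (S j) (x (idx j))) * g x + B := by
  classical
  have ha : ∀ j : Fin k, ∃ a, a ∉ S j := by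
    intro j
    by_contra h
    push_neg at h
    exact (hcan j).2.1 (Finset.eq_univ_iff_forall.mpr h)
  choose a haS using ha
  choose s hsS using fun j => (hcan j).1
  have hbb : ∀ j j' : Fin k, b j = b j' := by
    intro j j'
    rcases eq_or_ne j j' with rfl | hne
    · rfl
    · have hne' : idx j ≠ idx j' := fun h => hne (hinj h)
      set x : Fin n → F :=
        Function.update (Function.update (fun _ => (0:F)) (idx j) (s j)) (idx j') (s j')
        with hx
      have h1 : x (idx j) = s j := by
        rw [hx, Function.update_of_ne hne', Function.update_self]
      have h2 : x (idx j') = s j' := by rw [hx, Function.update_self]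
      have e1 := (hcan j).2.2.1 x (by rw [h1]; exact hsS j)
      have e2 := (hcan j').2.2.1 x (by rw [h2]; exact hsS j')
      rw [← e1, e2]
  set B := b ⟨0, hk⟩ with hB
  have key : ∀ T : Finset (Fin k), ∀ x : Fin n → F,
      (∀ j, x (idx j) ∉ S j) → f (patchOn idx a T x) = f x := by
    intro T
    induction T using Finset.induction_on with
    | empty => intro x _; rw [patchOn_empty]
    | @insert j T hj ih =>
      intro x hx
      rw [patchOn_insert hinj a T x j hj]
      have h1 : Function.update (patchOn idx a T x) (idx j) (a j) (idx j) = a j :=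
        Function.update_self _ _ _
      have h2 : patchOn idx a T x (idx j) = x (idx j) := by
        rw [patchOn_idx hinj, if_neg hj]
      have := (hcan j).2.2.2.1 (Function.update (patchOn idx a T x) (idx j) (a j))
        (patchOn idx a T x) (by rw [h1]; exact haS j) (by rw [h2]; exact hx j)
        (fun v hv => Function.update_of_ne hv _ _)
      rw [this, ih x hx]
  refine ⟨B, fun j => hbb j _, fun x => f (patchOn idx a Finset.univ x) - B, ?_, ?_⟩
  · intro x y hxy
    have : patchOn idx a Finset.univ x = patchOn idx a Finset.univ y := by
      funext v
      unfold patchOn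
      cases h : Function.partialInv idx v with
      | some j => simp
      | none =>
        have : ∀ j : Fin k, idx j ≠ v := by
          intro j hj
          rw [← hj, Function.partialInv_left hinj] at h
          exact Option.some_ne_none _ h
        simpa using hxy v this
    show f (patchOn idx a Finset.univ x) - B = f (patchOn idx a Finset.univ y) - B
    rw [this]
  · intro x
    by_cases hx : ∀ j, x (idx j) ∉ S j
    · have hprod : (∏ j : Fin k, Qt (S j) (x (idx j))) = 1 := by
        apply Finset.prod_eq_one
        intro j _
        rw [Qt, if_neg (hx j)]
      rw [hprod, one_mul]
      show f x = f (patchOn idx a Finset.univ x) - B + B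
      rw [key Finset.univ x hx]
      ring
    · push_neg at hx
      obtain ⟨j, hj⟩ := hx
      have hprod : (∏ j : Fin k, Qt (S j) (x (idx j))) = 0 :=
        Finset.prod_eq_zero (Finset.mem_univ j) (by rw [Qt, if_pos hj])
      rw [hprod, zero_mul, zero_add, (hcan j).2.2.1 x hj, hbb j]
end

section
/- Let f : F^n → F be in layered canalizing form with r layers of sizes k_1, …, k_r, and suppose all canalizing input sets S_{i,j} are equal to one common set S ⊆ F with 0 ∈ S. If the variable x_s lies in the ℓ-th layer (1 ≤ ℓ ≤ r), then the number of transitions changed by deleting x_s satisfies #{x ∈ F^n : f(x_1, …, x_{s−1}, 0, x_{s+1}, …, x_n) ≠ f(x)} ≤ p^{n − (k_1 + ⋯ + k_ℓ)} · (p − |S|)^{k_1 + ⋯ + k_ℓ}. -/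
open Finset

lemma nestEval_cons {F : Type*} [Mul F] [Add F] (a : F × F) (t : List (F × F)) (P : F) :
    nestEval (a :: t) P = a.1 * nestEval t P + a.2 := by
  obtain ⟨m, b⟩ := a; rfl

lemma nestEval_zero {F : Type*} [Field F] (l : List (F × F)) (i : ℕ) (hi : i < l.length)
    (h : (l.get ⟨i, hi⟩).1 = 0) (P : F) :
    nestEval l P = nestEval (l.take i) (l.get ⟨i, hi⟩).2 := by
  induction l generalizing i with
  | nil => simp at hi
  | cons a t ih =>
    cases i with
    | zero => simp_all [nestEval_cons]; rfl
    | succ i =>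
      simp only [List.get_cons_succ] at h ⊢
      rw [List.take_succ_cons, nestEval_cons, nestEval_cons, ih i _ h]

lemma key_eq {F : Type*} [Field F] [Fintype F] [DecidableEq F] {n r : ℕ}
    (L : LayeredForm F n r) (S : Finset F)
    (hS : ∀ i : Fin r, ∀ v ∈ L.layer i, L.S v = S) (h0 : (0 : F) ∈ S)
    (ℓ : Fin r) (s : Fin n) (hs : s ∈ L.layer ℓ)
    (x : Fin n → F) (i : Fin r) (hiℓ : i ≤ ℓ) (v : Fin n) (hv : v ∈ L.layer i)
    (hxv : x v ∈ S) :
    L.eval (Function.update x s 0) = L.eval x := by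
  set u := Function.update x s 0 with hu
  have hMne : ∀ j : Fin r, j ≠ ℓ → L.M j u = L.M j x := by
    intro j hj
    refine Finset.prod_congr rfl fun w hw => ?_
    have hws : w ≠ s := by
      intro h; subst h
      exact Finset.disjoint_left.mp (L.disj j ℓ hj) hw hs
    rw [hu, Function.update_of_ne hws]
  by_cases hvs : v = s
  · -- x s ∈ S : full equality of lists and PC
    subst hvs
    have hMl : L.M ℓ u = L.M ℓ x := by
      refine Finset.prod_congr rfl fun w hw => ?_
      by_cases hws : w = v
      · subst hws
        rw [hS ℓ w hw]
        simp [hu, Qt, Function.update_self, h0, hxv]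
      · rw [hu, Function.update_of_ne hws]
    have hPC : L.PC u = L.PC x := by
      by_contra hne
      exact L.PCvars ℓ v hs ⟨u, x, fun j hj => Function.update_of_ne hj _ _, hne⟩
    unfold LayeredForm.eval
    rw [hPC]
    congr 1
    exact congrArg List.ofFn (funext fun j => by
      by_cases hj : j = ℓ
      · subst hj; rw [hMl]
      · rw [hMne j hj])
  · -- truncation at layer i
    have hvS : L.S v = S := hS i v hv
    have hQ0 : Qt (L.S v) (x v) = 0 := by rw [hvS]; simp [Qt, hxv]
    have hMx : L.M i x = 0 := Finset.prod_eq_zero hv hQ0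
    have hMu : L.M i u = 0 := by
      refine Finset.prod_eq_zero hv ?_
      rw [hu, Function.update_of_ne hvs]; exact hQ0
    have hlen : ∀ y : Fin n → F,
        (i : ℕ) < (List.ofFn fun j => (L.M j y, L.B j)).length := by
      intro y; simp [i.isLt]
    have hget : ∀ y : Fin n → F,
        (List.ofFn fun j => (L.M j y, L.B j)).get ⟨(i : ℕ), hlen y⟩ = (L.M i y, L.B i) := by
      intro y
      rw [List.get_eq_getElem, List.getElem_ofFn]
    have htake : (List.ofFn fun j => (L.M j u, L.B j)).take (i : ℕ)
        = (List.ofFn fun j => (L.M j x, L.B j)).take (i : ℕ) := by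
      apply List.ext_getElem
      · simp
      · intro m h1 h2
        have hm : m < (i : ℕ) := by
          have := h1
          simp [List.length_take] at this
          omega
        have hmr : m < r := lt_of_lt_of_le hm (le_of_lt (lt_of_lt_of_le i.isLt (le_refl r)))
        rw [List.getElem_take, List.getElem_take, List.getElem_ofFn, List.getElem_ofFn]
        have hne : (⟨m, by simpa using hmr⟩ : Fin r) ≠ ℓ := by
          intro hc
          have : m = (ℓ : ℕ) := congrArg Fin.val hc
          have : (i : ℕ) ≤ (ℓ : ℕ) := hiℓ
          omega
        rw [hMne _ hne]
    unfold LayeredForm.eval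
    rw [nestEval_zero _ (i : ℕ) (hlen u) (by rw [hget u]; exact hMu),
        nestEval_zero _ (i : ℕ) (hlen x) (by rw [hget x]; exact hMx),
        hget u, hget x, htake]

/-- Edge-deletion bound when all canalizing input sets equal a common
set `S` with `0 ∈ S`. -/
theorem stmt4 {F : Type*} [Field F] [Fintype F] [DecidableEq F] {n r : ℕ}
    (f : (Fin n → F) → F) (L : LayeredForm F n r) (hf : f = L.eval)
    (S : Finset F) (hS : ∀ i : Fin r, ∀ v ∈ L.layer i, L.S v = S) (h0 : (0 : F) ∈ S)
    (ℓ : Fin r) (s : Fin n) (hs : s ∈ L.layer ℓ) :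
    chCount f s 0 ≤
      Fintype.card F ^ (n - ∑ i ∈ Finset.univ.filter (fun i : Fin r => i ≤ ℓ), (L.layer i).card) *
        (Fintype.card F - S.card) ^
          (∑ i ∈ Finset.univ.filter (fun i : Fin r => i ≤ ℓ), (L.layer i).card) := by
  classical
  set K := ∑ i ∈ Finset.univ.filter (fun i : Fin r => i ≤ ℓ), (L.layer i).card with hK
  set T := (Finset.univ.filter (fun i : Fin r => i ≤ ℓ)).biUnion L.layer with hT
  have hTcard : T.card = K :=
    Finset.card_biUnion (fun a _ b _ hab => L.disj a b hab)
  have hsub : (Finset.univ.filter fun x : Fin n → F => f (Function.update x s 0) ≠ f x)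
      ⊆ Fintype.piFinset (fun v : Fin n => if v ∈ T then Sᶜ else Finset.univ) := by
    intro x hx
    rw [Finset.mem_filter] at hx
    rw [Fintype.mem_piFinset]
    intro v
    by_cases hvT : v ∈ T
    · simp only [hvT, if_true, Finset.mem_compl]
      intro hxv
      obtain ⟨i, hi, hvi⟩ := Finset.mem_biUnion.mp hvT
      rw [Finset.mem_filter] at hi
      exact hx.2 (hf ▸ key_eq L S hS h0 ℓ s hs x i hi.2 v hvi hxv)
    · simp [hvT]
  have hcard : (Fintype.piFinset (fun v : Fin n => if v ∈ T then Sᶜ else Finset.univ)).card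
      = Fintype.card F ^ (n - K) * (Fintype.card F - S.card) ^ K := by
    rw [Fintype.card_piFinset]
    have : ∀ v : Fin n, ((if v ∈ T then Sᶜ else Finset.univ) : Finset F).card
        = if v ∈ T then Fintype.card F - S.card else Fintype.card F := by
      intro v
      by_cases hvT : v ∈ T <;> simp [hvT, Finset.card_compl, Finset.card_univ]
    simp_rw [this]
    rw [Finset.prod_ite]
    have h1 : Finset.univ.filter (fun v : Fin n => v ∈ T) = T := by
      ext v; simp
    have h2 : Finset.univ.filter (fun v : Fin n => ¬ v ∈ T) = Tᶜ := by
      ext v; simp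
    rw [h1, h2, Finset.prod_const, Finset.prod_const, hTcard, Finset.card_compl,
      Fintype.card_fin, hTcard]
    ring
  calc chCount f s 0 ≤ _ := Finset.card_le_card hsub
    _ = _ := hcard
end

section
/- Let f : F^n → F be in layered canalizing form with r layers of sizes k_1, …, k_r and canalizing input sets S_{i,j}, and let x_s be the s-th variable of the ℓ-th layer (1 ≤ ℓ ≤ r) with canalizing input set S_{ℓ,s} satisfying 0 ∈ S_{ℓ,s}. Then the number of transitions changed by deleting x_s satisfies #{x ∈ F^n : f(x_1, …, x_{s−1}, 0, x_{s+1}, …, x_n) ≠ f(x)} ≤ p^{n − (k_1 + ⋯ + k_ℓ)} · (∏_{i=1}^{ℓ−1} ∏_{j=1}^{k_i} (p − |S_{i,j}|)) · (∏_{j=1, j ≠ s}^{k_ℓ} (p − |S_{ℓ,j}|)) · (p − |S_{ℓ,s}|). -/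
open Finset

lemma nestEval_zero_congr {F : Type*} [MulZeroClass F] [Add F] :
    ∀ (i : ℕ) (l₁ l₂ : List (F × F)) (P₁ P₂ : F),
    (∀ j < i, l₁[j]? = l₂[j]?) →
    (∃ b, l₁[i]? = some (0, b) ∧ l₂[i]? = some (0, b)) →
    nestEval l₁ P₁ = nestEval l₂ P₂ := by
  intro i
  induction i with
  | zero =>
    rintro l₁ l₂ P₁ P₂ _ ⟨b, h1, h2⟩
    cases l₁ with
    | nil => simp at h1
    | cons a t₁ =>
      cases l₂ with
      | nil => simp at h2
      | cons c t₂ =>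
        simp only [List.getElem?_cons_zero, Option.some.injEq] at h1 h2
        subst h1; subst h2
        simp [nestEval]
  | succ k ih =>
    rintro l₁ l₂ P₁ P₂ hpre ⟨b, h1, h2⟩
    cases l₁ with
    | nil => simp at h1
    | cons a t₁ =>
      cases l₂ with
      | nil => simp at h2
      | cons c t₂ =>
        have hh : a = c := by
          have := hpre 0 (Nat.succ_pos k); simpa using this
        have htail : nestEval t₁ P₁ = nestEval t₂ P₂ := by
          refine ih t₁ t₂ P₁ P₂ (fun j hj => ?_) ⟨b, by simpa using h1, by simpa using h2⟩
          have := hpre (j + 1) (by omega); simpa using this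
        cases a; cases c
        simp only [Prod.mk.injEq] at hh
        simp [nestEval, hh.1, hh.2, htail]

/-- General edge-deletion bound for a variable `s` in the `ℓ`-th layer
whose canalizing input set contains `0`. -/
theorem stmt5 {F : Type*} [Field F] [Fintype F] [DecidableEq F] {n r : ℕ}
    (f : (Fin n → F) → F) (L : LayeredForm F n r) (hf : f = L.eval)
    (ℓ : Fin r) (s : Fin n) (hs : s ∈ L.layer ℓ) (h0 : (0 : F) ∈ L.S s) :
    chCount f s 0 ≤
      Fintype.card F ^ (n - ∑ i ∈ Finset.univ.filter (fun i : Fin r => i ≤ ℓ), (L.layer i).card) *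
        (∏ i ∈ Finset.univ.filter (fun i : Fin r => i < ℓ),
          ∏ v ∈ L.layer i, (Fintype.card F - (L.S v).card)) *
        (∏ v ∈ (L.layer ℓ).erase s, (Fintype.card F - (L.S v).card)) *
        (Fintype.card F - (L.S s).card) := by
  classical
  subst hf
  set p := Fintype.card F with hp
  set D : Finset (Fin n) := (Finset.univ.filter (fun i : Fin r => i ≤ ℓ)).biUnion L.layer
    with hD
  set t : Fin n → Finset F := fun v => if v ∈ D then (L.S v)ᶜ else Finset.univ with ht
  -- The subset step
  have hsub : (Finset.univ.filter fun x : Fin n → F =>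
      L.eval (Function.update x s 0) ≠ L.eval x) ⊆ Fintype.piFinset t := by
    intro x hx
    rw [Finset.mem_filter] at hx
    rw [Fintype.mem_piFinset]
    intro v
    by_cases hvD : v ∈ D
    · simp only [ht, hvD, if_pos, Finset.mem_compl]
      intro hvS
      apply hx.2
      obtain ⟨i, hi, hvi⟩ := Finset.mem_biUnion.mp hvD
      have hiℓ : i ≤ ℓ := (Finset.mem_filter.mp hi).2
      set x' := Function.update x s 0 with hx'
      -- M j x' = M j x for j ≠ ℓ
      have hM : ∀ j : Fin r, j ≠ ℓ → L.M j x' = L.M j x := by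
        intro j hj
        refine Finset.prod_congr rfl fun w hw => ?_
        have hws : w ≠ s := fun h => by
          exact (Finset.disjoint_left.mp (L.disj j ℓ hj) hw) (h ▸ hs)
        rw [hx', Function.update_of_ne hws]
      have hMℓ' : L.M ℓ x' = 0 := by
        refine Finset.prod_eq_zero hs ?_
        rw [hx', Function.update_self, Qt, if_pos h0]
      have hMi0 : L.M i x = 0 := by
        refine Finset.prod_eq_zero hvi ?_
        rw [Qt, if_pos hvS]
      have hMi'0 : L.M i x' = 0 := by
        by_cases hiℓ' : i = ℓ
        · rw [hiℓ']; exact hMℓ'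
        · rw [hM i hiℓ']; exact hMi0
      -- apply nestEval_zero_congr at index i
      unfold LayeredForm.eval
      refine nestEval_zero_congr i.1 _ _ _ _ (fun j hj => ?_) ⟨L.B i, ?_, ?_⟩
      · have hjr : j < r := lt_trans hj i.2
        have hjℓ : (⟨j, hjr⟩ : Fin r) ≠ ℓ := by
          intro h
          have : (⟨j, hjr⟩ : Fin r) < i := by
            rw [Fin.lt_def]; exact hj
          have h2 : i ≤ (⟨j, hjr⟩ : Fin r) := h ▸ hiℓ
          exact absurd (lt_of_le_of_lt h2 this) (lt_irrefl _)
        simp [List.ofFnNthVal, hjr, hM _ hjℓ]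
      · simp [List.ofFnNthVal, i.2, hMi'0]
      · simp [List.ofFnNthVal, i.2, hMi0]
    · simp [ht, hvD]
  -- Cardinality computation
  have hdisj : (↑(Finset.univ.filter (fun i : Fin r => i ≤ ℓ)) :
      Set (Fin r)).PairwiseDisjoint L.layer := fun i _ j _ hij => L.disj i j hij
  have hcardD : D.card = ∑ i ∈ Finset.univ.filter (fun i : Fin r => i ≤ ℓ),
      (L.layer i).card := Finset.card_biUnion (fun i hi j hj hij => L.disj i j hij)
  have hfilter : Finset.univ.filter (fun i : Fin r => i ≤ ℓ) =
      insert ℓ (Finset.univ.filter (fun i : Fin r => i < ℓ)) := by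
    ext i
    simp [le_iff_lt_or_eq, or_comm]
  have hℓnot : ℓ ∉ Finset.univ.filter (fun i : Fin r => i < ℓ) := by simp
  have hcardT : (Fintype.piFinset t).card =
      p ^ (n - ∑ i ∈ Finset.univ.filter (fun i : Fin r => i ≤ ℓ), (L.layer i).card) *
        (∏ i ∈ Finset.univ.filter (fun i : Fin r => i < ℓ),
          ∏ v ∈ L.layer i, (p - (L.S v).card)) *
        (∏ v ∈ (L.layer ℓ).erase s, (p - (L.S v).card)) *
        (p - (L.S s).card) := by
    rw [Fintype.card_piFinset]
    have h1 : ∏ v : Fin n, (t v).card =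
        (∏ v ∈ D, (t v).card) * ∏ v ∈ Dᶜ, (t v).card :=
      (Finset.prod_mul_prod_compl D _).symm
    rw [h1]
    have h2 : ∏ v ∈ D, (t v).card = ∏ v ∈ D, (p - (L.S v).card) := by
      refine Finset.prod_congr rfl fun v hv => ?_
      rw [ht]; simp only [if_pos hv]
      rw [Finset.card_compl]
    have h3 : ∏ v ∈ Dᶜ, (t v).card = p ^ (n - D.card) := by
      have : ∀ v ∈ Dᶜ, (t v).card = p := by
        intro v hv
        rw [Finset.mem_compl] at hv
        rw [ht]; simp only [if_neg hv]
        rw [Finset.card_univ]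
      rw [Finset.prod_congr rfl this, Finset.prod_const, Finset.card_compl,
        Fintype.card_fin]
    rw [h2, h3, hcardD]
    have h4 : ∏ v ∈ D, (p - (L.S v).card) =
        ∏ i ∈ Finset.univ.filter (fun i : Fin r => i ≤ ℓ),
          ∏ v ∈ L.layer i, (p - (L.S v).card) :=
      Finset.prod_biUnion hdisj
    rw [h4, hfilter, Finset.prod_insert hℓnot,
      ← Finset.mul_prod_erase (L.layer ℓ) _ hs]
    ring
  calc chCount L.eval s 0 ≤ (Fintype.piFinset t).card := Finset.card_le_card hsub
    _ = _ := hcardT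
end

section
/- Let p = 2, so F is the field with two elements, and let f : F^n → F be in layered canalizing form with r layers of sizes k_1, …, k_r (each canalizing input set is then a singleton). If the variable x_s lies in the ℓ-th layer, then the number of transitions changed by deleting x_s satisfies #{x ∈ F^n : f(x_1, …, x_{s−1}, 0, x_{s+1}, …, x_n) ≠ f(x)} ≤ 2^{n − (k_1 + ⋯ + k_ℓ)}. -/
open Finset

lemma nest_aux {F : Type*} [Field F] : ∀ {r : ℕ} (m m' b : Fin r → F) (P P' : F) (i : Fin r),
    m i = 0 → m' i = 0 → (∀ j, j ≤ i → m j = m' j) →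
    nestEval (List.ofFn fun k => (m k, b k)) P = nestEval (List.ofFn fun k => (m' k, b k)) P'
  | 0, _, _, _, _, _, i => i.elim0
  | (r + 1), m, m', b, P, P', i => by
    intro hm hm' hj
    rw [List.ofFn_succ, List.ofFn_succ]
    show m 0 * _ + b 0 = m' 0 * _ + b 0
    induction i using Fin.cases with
    | zero => rw [hm, hm', zero_mul, zero_mul]
    | succ i =>
      have h0 : m 0 = m' 0 := hj 0 (Fin.zero_le _)
      rw [h0, nest_aux (fun k => m k.succ) (fun k => m' k.succ) (fun k => b k.succ) P P' i
        hm hm' (fun j hji => hj j.succ (Fin.succ_le_succ_iff.mpr hji))]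

lemma two_elt {F : Type*} [Fintype F] (hp : Fintype.card F = 2) (a b c : F)
    (ha : a ≠ c) (hb : b ≠ c) : a = b := by
  have h2 : Nat.card F = 2 := by rw [Nat.card_eq_fintype_card, hp]
  obtain ⟨x, y, hxy, hu⟩ := Nat.card_eq_two_iff.mp h2
  have h : ∀ z : F, z = x ∨ z = y := fun z => by
    have := hu.symm ▸ Set.mem_univ z; simpa using this
  rcases h a with h1 | h1 <;> rcases h b with h2 | h2 <;> rcases h c with h3 | h3 <;>
    simp_all

/-- In the Boolean case `p = 2`, the edge-deletion bound for a variable `s`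
in the `ℓ`-th layer reduces to `2 ^ (n - (k₁ + ⋯ + k_ℓ))`. -/
theorem stmt7 {F : Type*} [Field F] [Fintype F] [DecidableEq F] (hp : Fintype.card F = 2)
    {n r : ℕ} (f : (Fin n → F) → F) (L : LayeredForm F n r) (hf : f = L.eval)
    (ℓ : Fin r) (s : Fin n) (hs : s ∈ L.layer ℓ) :
    chCount f s 0 ≤
      2 ^ (n - ∑ i ∈ Finset.univ.filter (fun i : Fin r => i ≤ ℓ), (L.layer i).card) := by
  classical
  subst hf
  set T : Finset (Fin n) := (Finset.univ.filter (fun i : Fin r => i ≤ ℓ)).biUnion L.layer with hT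
  have key : ∀ x : Fin n → F,
      L.eval (Function.update x s 0) ≠ L.eval x →
      x s ≠ 0 ∧ ∀ v ∈ T, v ≠ s → x v ∉ L.S v := by
    intro x hx
    constructor
    · intro h0
      apply hx
      rw [← h0, Function.update_eq_self]
    · intro v hv hvs hvS
      obtain ⟨i, hi, hvi⟩ := Finset.mem_biUnion.mp hv
      have hiℓ : i ≤ ℓ := (Finset.mem_filter.mp hi).2
      exfalso; apply hx
      set x' := Function.update x s 0 with hx'
      have hx's : ∀ w, w ≠ s → x' w = x w := fun w hw => Function.update_of_ne hw _ _
      have hQ : Qt (L.S v) (x v) = 0 := if_pos hvS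
      have hMx : L.M i x = 0 := Finset.prod_eq_zero hvi hQ
      have hMx' : L.M i x' = 0 := Finset.prod_eq_zero hvi (by rw [Qt, hx's v hvs]; exact hQ)
      have hMj : ∀ j : Fin r, j ≤ i → L.M j x' = L.M j x := by
        intro j hji
        by_cases hjl : j = ℓ
        · have hiℓ' : i = ℓ := le_antisymm hiℓ (hjl ▸ hji)
          rw [hjl, ← hiℓ', hMx, hMx']
        · refine Finset.prod_congr rfl fun w hw => ?_
          have hws : w ≠ s := by
            intro h; subst h
            exact (Finset.disjoint_left.mp (L.disj j ℓ hjl)) hw hs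
          rw [hx's w hws]
      exact nest_aux (fun k => L.M k x') (fun k => L.M k x) L.B (L.PC x') (L.PC x) i
        hMx' hMx hMj
  have hTcard : T.card = ∑ i ∈ Finset.univ.filter (fun i : Fin r => i ≤ ℓ), (L.layer i).card :=
    Finset.card_biUnion (fun i _ j _ hij => L.disj i j hij)
  rw [chCount, ← hTcard]
  have hinj : (Finset.univ.filter fun x : Fin n → F =>
        L.eval (Function.update x s 0) ≠ L.eval x).card ≤
      Fintype.card ({v : Fin n // v ∉ T} → F) := by
    rw [← Finset.card_univ]
    refine Finset.card_le_card_of_injOn (fun x (v : {v : Fin n // v ∉ T}) => x v.1)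
      (fun a _ => Finset.mem_univ _) ?_
    intro x hxD y hyD hxy
    simp only [Finset.coe_filter, Set.mem_setOf_eq, Finset.mem_univ, true_and] at hxD hyD
    obtain ⟨hx1, hx2⟩ := key x hxD
    obtain ⟨hy1, hy2⟩ := key y hyD
    funext v
    by_cases hvT : v ∈ T
    · by_cases hvs : v = s
      · subst hvs; exact two_elt hp _ _ 0 hx1 hy1
      · obtain ⟨i, hi, hvi⟩ := Finset.mem_biUnion.mp hvT
        obtain ⟨w, hw⟩ := L.Sne i v hvi
        exact two_elt hp _ _ w (fun h => hx2 v hvT hvs (h ▸ hw))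
          (fun h => hy2 v hvT hvs (h ▸ hw))
    · exact congrFun hxy ⟨v, hvT⟩
  refine hinj.trans (le_of_eq ?_)
  rw [Fintype.card_fun, hp, Fintype.card_subtype_compl, Fintype.card_coe, Fintype.card_fin]
end

section
/- Let f : F^n → F be in layered canalizing form with r layers of sizes k_1, …, k_r and canalizing input sets S_{i,j}, let x_s be the s-th variable of the ℓ-th layer, and let a ∈ F. Then the number of transitions changed by constantly expressing x_s to a satisfies #{x ∈ F^n : f(x_1, …, x_{s−1}, a, x_{s+1}, …, x_n) ≠ f(x)} ≤ p^{n − (k_1 + ⋯ + k_ℓ)} · (∏_{i=1}^{ℓ−1} ∏_{j=1}^{k_i} (p − |S_{i,j}|)) · (∏_{j=1, j ≠ s}^{k_ℓ} (p − |S_{ℓ,j}|)) · (p − R), where R = |S_{ℓ,s}| if a ∈ S_{ℓ,s} and R = p − |S_{ℓ,s}| if a ∉ S_{ℓ,s}. -/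
open Finset

lemma nestEval_append {F : Type*} [Mul F] [Add F] (l1 l2 : List (F × F)) (P : F) :
    nestEval (l1 ++ l2) P = nestEval l1 (nestEval l2 P) := by
  induction l1 with
  | nil => rfl
  | cons h t ih => obtain ⟨m, b⟩ := h; simp [nestEval, ih]

lemma nestEval_affine {F : Type*} [Field F] (l : List (F × F)) :
    ∃ c : F, ∀ z, nestEval l z = (l.map Prod.fst).prod * z + c := by
  induction l with
  | nil => exact ⟨0, fun z => by simp [nestEval]⟩
  | cons h t ih =>
    obtain ⟨c, hc⟩ := ih
    exact ⟨h.1 * c + h.2, fun z => by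
      obtain ⟨m, b⟩ := h
      simp [nestEval, hc]; ring⟩

lemma ofFn_split {α : Type*} {r : ℕ} (g : Fin r → α) (ℓ : Fin r) :
    List.ofFn g =
      (List.ofFn fun i : Fin ℓ.val => g ⟨i, lt_trans i.2 ℓ.2⟩) ++
      g ℓ :: (List.ofFn fun i : Fin (r - ℓ.val - 1) => g ⟨ℓ.val + 1 + i, by omega⟩) := by
  apply List.ext_getElem
  · simp; omega
  · intro i h1 h2
    simp only [List.getElem_ofFn, List.getElem_append, List.length_ofFn, List.getElem_cons]
    split
    · simp
    · split
      · next h h' =>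
        congr 1
        apply Fin.ext
        simp; omega
      · next h h' =>
        congr 1
        apply Fin.ext
        simp
        omega

/-- Bound on the number of changed transitions for the constant expression
of the variable `s` (in the `ℓ`-th layer) to the value `a`. -/
theorem stmt8 {F : Type*} [Field F] [Fintype F] [DecidableEq F] {n r : ℕ}
    (f : (Fin n → F) → F) (L : LayeredForm F n r) (hf : f = L.eval)
    (ℓ : Fin r) (s : Fin n) (hs : s ∈ L.layer ℓ) (a : F) :
    chCount f s a ≤
      Fintype.card F ^ (n - ∑ i ∈ Finset.univ.filter (fun i : Fin r => i ≤ ℓ), (L.layer i).card) *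
        (∏ i ∈ Finset.univ.filter (fun i : Fin r => i < ℓ),
          ∏ v ∈ L.layer i, (Fintype.card F - (L.S v).card)) *
        (∏ v ∈ (L.layer ℓ).erase s, (Fintype.card F - (L.S v).card)) *
        (Fintype.card F -
          if a ∈ L.S s then (L.S s).card else Fintype.card F - (L.S s).card) := by
  classical
  set K : Finset (Fin n) := (Finset.univ.filter (fun i : Fin r => i ≤ ℓ)).biUnion L.layer with hK
  have hsK : s ∈ K := Finset.mem_biUnion.2 ⟨ℓ, by simp, hs⟩
  set T : Fin n → Finset F := fun v =>
    if v = s then (if a ∈ L.S s then (L.S s)ᶜ else L.S s)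
    else if v ∈ K then (L.S v)ᶜ else Finset.univ with hT
  have hsub : (Finset.univ.filter fun x : Fin n → F => f (Function.update x s a) ≠ f x)
      ⊆ Fintype.piFinset T := by
    intro x hx
    have hne : f (Function.update x s a) ≠ f x := (Finset.mem_filter.1 hx).2
    set x' := Function.update x s a with hx'def
    have hxv : ∀ v : Fin n, v ≠ s → x' v = x v := fun v hv => Function.update_of_ne hv _ _
    have hx's : x' s = a := Function.update_self _ _ _
    have hsnot : ∀ i : Fin r, i ≠ ℓ → s ∉ L.layer i := fun i hi =>
      Finset.disjoint_right.1 (L.disj i ℓ hi) hs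
    have hM : ∀ i : Fin r, i ≠ ℓ → L.M i x' = L.M i x := by
      intro i hi
      exact Finset.prod_congr rfl fun v hv => by
        rw [hxv v (fun h => hsnot i hi (h ▸ hv))]
    have hPC : L.PC x' = L.PC x := by
      by_contra h
      exact L.PCvars ℓ s hs ⟨x', x, fun j hj => hxv j hj, h⟩
    rw [hf] at hne
    unfold LayeredForm.eval at hne
    rw [ofFn_split (fun i => (L.M i x, L.B i)) ℓ, ofFn_split (fun i => (L.M i x', L.B i)) ℓ,
      hPC] at hne
    have hA : (List.ofFn fun i : Fin ℓ.val =>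
        (fun i => (L.M i x', L.B i)) ⟨i, lt_trans i.2 ℓ.2⟩) =
        (List.ofFn fun i : Fin ℓ.val =>
        (fun i => (L.M i x, L.B i)) ⟨i, lt_trans i.2 ℓ.2⟩) := by
      congr 1
      funext i
      simp only
      rw [hM _ (by intro h; exact absurd (congrArg Fin.val h) (by simp; omega))]
    have hC : (List.ofFn fun i : Fin (r - ℓ.val - 1) =>
        (fun i => (L.M i x', L.B i)) ⟨ℓ.val + 1 + i, by omega⟩) =
        (List.ofFn fun i : Fin (r - ℓ.val - 1) =>
        (fun i => (L.M i x, L.B i)) ⟨ℓ.val + 1 + i, by omega⟩) := by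
      congr 1
      funext i
      simp only
      rw [hM _ (by intro h; exact absurd (congrArg Fin.val h) (by simp; omega))]
    rw [hA, hC] at hne
    set A := (List.ofFn fun i : Fin ℓ.val =>
        (fun i => (L.M i x, L.B i)) ⟨i, lt_trans i.2 ℓ.2⟩) with hAdef
    set C := (List.ofFn fun i : Fin (r - ℓ.val - 1) =>
        (fun i => (L.M i x, L.B i)) ⟨ℓ.val + 1 + i, by omega⟩) with hCdef
    rw [nestEval_append, nestEval_append] at hne
    obtain ⟨c, hc⟩ := nestEval_affine A
    rw [hc, hc] at hne
    simp only [nestEval] at hne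
    set w := nestEval C (L.PC x) with hwdef
    have hprodA : (A.map Prod.fst).prod ≠ 0 := by
      intro h
      apply hne
      rw [h, zero_mul, zero_mul]
    have hMl : L.M ℓ x' ≠ L.M ℓ x := by
      intro h
      apply hne
      rw [h]
    have h1 : ∀ i : Fin r, i < ℓ → L.M i x ≠ 0 := by
      intro i hi hMi
      apply hprodA
      rw [hAdef, List.map_ofFn, List.prod_ofFn]
      refine Finset.prod_eq_zero (Finset.mem_univ (⟨i.val, hi⟩ : Fin ℓ.val)) ?_
      simpa [Fin.ext_iff, show ((⟨i.val, lt_trans hi ℓ.2⟩ : Fin r)) = i from Fin.ext rfl] using hMi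
    have hMsplit : ∀ y : Fin n → F,
        L.M ℓ y = Qt (L.S s) (y s) * ∏ v ∈ (L.layer ℓ).erase s, Qt (L.S v) (y v) :=
      fun y => (Finset.mul_prod_erase _ _ hs).symm
    have hkey : (∏ v ∈ (L.layer ℓ).erase s, Qt (L.S v) (x v)) ≠ 0 ∧
        Qt (L.S s) a ≠ Qt (L.S s) (x s) := by
      have hthis := hMl
      rw [hMsplit, hMsplit] at hthis
      have he : (∏ v ∈ (L.layer ℓ).erase s, Qt (L.S v) (x' v)) =
          ∏ v ∈ (L.layer ℓ).erase s, Qt (L.S v) (x v) :=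
        Finset.prod_congr rfl fun v hv => by rw [hxv v (Finset.ne_of_mem_erase hv)]
      rw [he, hx's] at hthis
      refine ⟨fun h => hthis ?_, fun h => hthis (by rw [h])⟩
      rw [h, mul_zero, mul_zero]
    rw [Fintype.mem_piFinset]
    intro v
    by_cases hvs : v = s
    · subst hvs
      simp only [hT, if_pos rfl]
      by_cases haS : a ∈ L.S v
      · rw [if_pos haS, Finset.mem_compl]
        intro hxS
        exact hkey.2 (by simp [Qt, haS, hxS])
      · rw [if_neg haS]
        by_contra hxS
        exact hkey.2 (by simp [Qt, haS, hxS])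
    · simp only [hT, if_neg hvs]
      by_cases hvK : v ∈ K
      · rw [if_pos hvK, Finset.mem_compl]
        obtain ⟨i, hi, hvi⟩ := Finset.mem_biUnion.1 hvK
        have hile : i ≤ ℓ := (Finset.mem_filter.1 hi).2
        rcases lt_or_eq_of_le hile with hlt | heq
        · intro hxS
          exact h1 i hlt (Finset.prod_eq_zero hvi (by simp [Qt, hxS]))
        · subst heq
          intro hxS
          exact hkey.1 (Finset.prod_eq_zero (Finset.mem_erase.2 ⟨hvs, hvi⟩) (by simp [Qt, hxS]))
      · rw [if_neg hvK]
        exact Finset.mem_univ _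
  -- counting
  have hKcard : K.card = ∑ i ∈ Finset.univ.filter (fun i : Fin r => i ≤ ℓ), (L.layer i).card :=
    Finset.card_biUnion (fun i _ j _ h => L.disj i j h)
  have hTuniv : ∀ v ∈ Kᶜ, (T v).card = Fintype.card F := by
    intro v hv
    have hvK : v ∉ K := Finset.mem_compl.1 hv
    have hvs : v ≠ s := fun h => hvK (h ▸ hsK)
    simp [hT, hvs, hvK]
  have hfe : Finset.univ.filter (fun i : Fin r => i ≤ ℓ) =
      insert ℓ (Finset.univ.filter (fun i : Fin r => i < ℓ)) := by
    ext i
    simp [le_iff_lt_or_eq, or_comm]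
  have hprodK : ∏ v ∈ K, (T v).card =
      ((Fintype.card F - if a ∈ L.S s then (L.S s).card else Fintype.card F - (L.S s).card) *
        ∏ v ∈ (L.layer ℓ).erase s, (Fintype.card F - (L.S v).card)) *
      ∏ i ∈ Finset.univ.filter (fun i : Fin r => i < ℓ),
          ∏ v ∈ L.layer i, (Fintype.card F - (L.S v).card) := by
    rw [hK, Finset.prod_biUnion (fun i _ j _ h => L.disj i j h), hfe,
      Finset.prod_insert (by simp)]
    congr 1
    · -- layer ℓ part
      rw [← Finset.mul_prod_erase _ _ hs]
      congr 1
      · -- T s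
        simp only [hT, if_pos rfl]
        by_cases haS : a ∈ L.S s
        · rw [if_pos haS, if_pos haS, Finset.card_compl]
        · rw [if_neg haS, if_neg haS, Nat.sub_sub_self (Finset.card_le_univ _)]
      · refine Finset.prod_congr rfl fun v hv => ?_
        have hvs : v ≠ s := Finset.ne_of_mem_erase hv
        have hvK : v ∈ K := Finset.mem_biUnion.2 ⟨ℓ, by simp, Finset.mem_of_mem_erase hv⟩
        simp [hT, hvs, hvK, Finset.card_compl]
    · refine Finset.prod_congr rfl fun i hi => Finset.prod_congr rfl fun v hv => ?_
      have hilt : i < ℓ := (Finset.mem_filter.1 hi).2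
      have hine : i ≠ ℓ := ne_of_lt hilt
      have hvs : v ≠ s := fun h =>
        Finset.disjoint_left.1 (L.disj i ℓ hine) (h ▸ hv) hs
      have hvK : v ∈ K := Finset.mem_biUnion.2 ⟨i, by simp [le_of_lt hilt], hv⟩
      simp [hT, hvs, hvK, Finset.card_compl]
  calc chCount f s a ≤ (Fintype.piFinset T).card := Finset.card_le_card hsub
    _ = ∏ v, (T v).card := Fintype.card_piFinset T
    _ = (∏ v ∈ K, (T v).card) * ∏ v ∈ Kᶜ, (T v).card := (Finset.prod_mul_prod_compl K _).symm
    _ = (∏ v ∈ K, (T v).card) * Fintype.card F ^ (n - K.card) := by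
        rw [Finset.prod_congr rfl hTuniv, Finset.prod_const, Finset.card_compl,
          Fintype.card_fin]
    _ = _ := by
        rw [hprodK, hKcard]
        ring
end

section
/- Let f : F^n → F be in layered canalizing form with r layers of sizes k_1, …, k_r, canalizing depth d = k_1 + ⋯ + k_r, and canalizing input sets S_{i,j}, where the core function P_C has no canalizing variables. If x_s is one of the n − d remaining variables in the support of P_C, then the number of transitions changed by deleting x_s satisfies #{x ∈ F^n : f(x_1, …, x_{s−1}, 0, x_{s+1}, …, x_n) ≠ f(x)} ≤ p^{n − d − 1} · (∏_{i=1}^{r} ∏_{j=1}^{k_i} (p − |S_{i,j}|)) · (p − 1). -/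
open Finset

lemma nestEval_sub {F : Type*} [Field F] (l : List (F × F)) (P Q : F) :
    nestEval l P - nestEval l Q = (l.map Prod.fst).prod * (P - Q) := by
  induction l with
  | nil => simp [nestEval]
  | cons h t ih =>
    obtain ⟨m, b⟩ := h
    simp only [nestEval, List.map_cons, List.prod_cons]
    rw [mul_assoc, ← ih]; ring

/-- Edge-deletion bound for a variable `s` in the support of a core
function `P_C` that has no canalizing variables. -/
theorem stmt9 {F : Type*} [Field F] [Fintype F] [DecidableEq F] {n r : ℕ}
    (f : (Fin n → F) → F) (L : LayeredForm F n r) (hf : f = L.eval)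
    (hnc : ∀ v : Fin n, DependsOnVar n L.PC v →
      ¬ ∃ (S' : Finset F) (b : F), Canalizing n L.PC v S' b)
    (s : Fin n) (hsupp : DependsOnVar n L.PC s) :
    chCount f s 0 ≤
      Fintype.card F ^ (n - (∑ i : Fin r, (L.layer i).card) - 1) *
        (∏ i : Fin r, ∏ v ∈ L.layer i, (Fintype.card F - (L.S v).card)) *
        (Fintype.card F - 1) := by
  classical
  set p := Fintype.card F with hp
  have hs : ∀ i : Fin r, s ∉ L.layer i := fun i hi => L.PCvars i s hi hsupp
  set D : Finset (Fin n) := Finset.univ.biUnion (fun i => L.layer i) with hD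
  have hsD : s ∉ D := by
    simp only [hD, Finset.mem_biUnion, Finset.mem_univ, true_and, not_exists]
    exact hs
  have hDcard : D.card = ∑ i : Fin r, (L.layer i).card :=
    Finset.card_biUnion (fun i _ j _ hij => L.disj i j hij)
  set A : Fin n → Finset F := fun j =>
    if j = s then Finset.univ \ {0} else if j ∈ D then (L.S j)ᶜ else Finset.univ with hA
  have hsubset : (Finset.univ.filter fun x : Fin n → F =>
      f (Function.update x s 0) ≠ f x) ⊆ Fintype.piFinset A := by
    intro x hx
    simp only [Finset.mem_filter, Finset.mem_univ, true_and] at hx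
    set u := Function.update x s 0 with hu
    have hlist : (List.ofFn fun i => (L.M i u, L.B i)) =
        (List.ofFn fun i => (L.M i x, L.B i)) := by
      congr 1
      funext i
      have : L.M i u = L.M i x := by
        refine Finset.prod_congr rfl fun v hv => ?_
        have hvs : v ≠ s := fun h => hs i (h ▸ hv)
        rw [hu, Function.update_of_ne hvs]
      rw [this]
    have hne : L.eval u - L.eval x ≠ 0 := by
      rw [hf] at hx
      exact sub_ne_zero.mpr hx
    rw [LayeredForm.eval, LayeredForm.eval, hlist, nestEval_sub] at hne
    have hprodne : ((List.ofFn fun i => (L.M i x, L.B i)).map Prod.fst).prod ≠ 0 :=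
      fun h => hne (by rw [h, zero_mul])
    have hPCne : L.PC u ≠ L.PC x := by
      intro h
      exact hne (by rw [h, sub_self, mul_zero])
    have hMne : ∀ i : Fin r, L.M i x ≠ 0 := by
      rw [List.map_ofFn, List.prod_ofFn] at hprodne
      intro i
      exact Finset.prod_ne_zero_iff.mp hprodne i (Finset.mem_univ i)
    have hxs : x s ≠ 0 := by
      intro h
      apply hPCne
      rw [hu, ← h, Function.update_eq_self]
    rw [Fintype.mem_piFinset]
    intro j
    show x j ∈ if j = s then Finset.univ \ {0} else if j ∈ D then (L.S j)ᶜ else Finset.univ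
    by_cases hjs : j = s
    · subst hjs
      rw [if_pos rfl, Finset.mem_sdiff, Finset.mem_singleton]
      exact ⟨Finset.mem_univ _, hxs⟩
    · simp only [if_neg hjs]
      by_cases hjD : j ∈ D
      · simp only [if_pos hjD, Finset.mem_compl]
        obtain ⟨i, -, hji⟩ := Finset.mem_biUnion.mp hjD
        have := Finset.prod_ne_zero_iff.mp (hMne i) j hji
        intro hmem
        exact this (by simp [Qt, hmem])
      · rw [if_neg hjD]; exact Finset.mem_univ _
  have hcard : ∏ j, (A j).card =
      p ^ (n - (∑ i : Fin r, (L.layer i).card) - 1) *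
        (∏ i : Fin r, ∏ v ∈ L.layer i, (p - (L.S v).card)) * (p - 1) := by
    rw [← Finset.prod_mul_prod_compl (insert s D)]
    have h1 : ∏ j ∈ insert s D, (A j).card =
        (p - 1) * ∏ i : Fin r, ∏ v ∈ L.layer i, (p - (L.S v).card) := by
      rw [Finset.prod_insert hsD]
      have hAs : (A s).card = p - 1 := by
        have : A s = Finset.univ \ {0} := by simp [hA]
        rw [this, Finset.card_sdiff_of_subset (Finset.subset_univ _), Finset.card_singleton,
          Finset.card_univ]
      have hrest : ∏ j ∈ D, (A j).card =
          ∏ i : Fin r, ∏ v ∈ L.layer i, (p - (L.S v).card) := by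
        rw [hD, Finset.prod_biUnion (fun i _ j _ hij => L.disj i j hij)]
        refine Finset.prod_congr rfl fun i _ => Finset.prod_congr rfl fun v hv => ?_
        have hvs : v ≠ s := fun h => hs i (h ▸ hv)
        have hvD : v ∈ D := Finset.mem_biUnion.mpr ⟨i, Finset.mem_univ i, hv⟩
        have : A v = (L.S v)ᶜ := by simp [hA, hvs, hvD]
        rw [this, Finset.card_compl]
      rw [hAs, hrest]
    have h2 : ∏ j ∈ (insert s D)ᶜ, (A j).card =
        p ^ (n - (∑ i : Fin r, (L.layer i).card) - 1) := by
      have : ∀ j ∈ (insert s D)ᶜ, (A j).card = p := by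
        intro j hj
        rw [Finset.mem_compl, Finset.mem_insert, not_or] at hj
        have : A j = Finset.univ := by simp [hA, hj.1, hj.2]
        rw [this, Finset.card_univ]
      rw [Finset.prod_congr rfl this, Finset.prod_const, Finset.card_compl,
        Finset.card_insert_of_notMem hsD, hDcard, Fintype.card_fin]
      congr 1
    rw [h1, h2]
    ring
  calc chCount f s 0 ≤ (Fintype.piFinset A).card := Finset.card_le_card hsubset
    _ = ∏ j, (A j).card := Fintype.card_piFinset A
    _ = _ := hcard
end

section
/- Let f : F^n → F be in layered canalizing form with r layers of sizes k_1, …, k_r, canalizing depth d, and canalizing input sets S_{i,j}, and suppose the core function P_C is canalizing in the variable x_s with canalizing input set S_s (but P_C is not 1-canalizing). If x_a is a variable in the support of P_C that is not canalizing for P_C, then the number of transitions changed by deleting x_a satisfies #{x ∈ F^n : f(x_1, …, x_{a−1}, 0, x_{a+1}, …, x_n) ≠ f(x)} ≤ p^{n − d − 2} · (∏_{i=1}^{r} ∏_{j=1}^{k_i} (p − |S_{i,j}|)) · (p − |S_s|) · (p − 1). -/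
open Finset

lemma nestEval_ne_aux {F : Type*} [Field F] : ∀ (l : List (F × F)) (P P' : F),
    nestEval l P ≠ nestEval l P' → P ≠ P' ∧ ∀ mb ∈ l, mb.1 ≠ 0 := by
  intro l
  induction l with
  | nil => intro P P' h; exact ⟨h, by simp⟩
  | cons hd t ih =>
    obtain ⟨m, b⟩ := hd
    intro P P' h
    simp only [nestEval] at h
    have hm : m ≠ 0 := by rintro rfl; apply h; ring
    have ht : nestEval t P ≠ nestEval t P' := by
      intro he; apply h; rw [he]
    obtain ⟨h1, h2⟩ := ih P P' ht
    refine ⟨h1, ?_⟩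
    intro mb hmb
    rcases List.mem_cons.mp hmb with rfl | hmem
    · exact hm
    · exact h2 _ hmem

/-- Edge-deletion bound for a non-canalizing variable `a` in the support of
a core function `P_C` that is canalizing (but not 1-canalizing) in a variable `s`. -/
theorem stmt13 {F : Type*} [Field F] [Fintype F] [DecidableEq F] {n r : ℕ}
    (f : (Fin n → F) → F) (L : LayeredForm F n r) (hf : f = L.eval)
    (s : Fin n) (hsrem : ∀ i : Fin r, s ∉ L.layer i)
    (Ss : Finset F) (hcan : ∃ b : F, Canalizing n L.PC s Ss b)
    (a : Fin n) (hadep : DependsOnVar n L.PC a)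
    (hanc : ¬ ∃ (S' : Finset F) (b : F), Canalizing n L.PC a S' b) :
    chCount f a 0 ≤
      Fintype.card F ^ (n - (∑ i : Fin r, (L.layer i).card) - 2) *
        (∏ i : Fin r, ∏ v ∈ L.layer i, (Fintype.card F - (L.S v).card)) *
        (Fintype.card F - Ss.card) * (Fintype.card F - 1) := by
  classical
  obtain ⟨b0, hb0⟩ := hcan
  have has : a ≠ s := by rintro rfl; exact hanc ⟨Ss, b0, hb0⟩
  have haL : ∀ i, a ∉ L.layer i := fun i hi => absurd hadep (L.PCvars i a hi)
  set A : Fin n → Finset F := fun v =>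
    if ∃ i, v ∈ L.layer i then (L.S v)ᶜ
    else if v = a then ({0} : Finset F)ᶜ
    else if v = s then Ssᶜ
    else Finset.univ with hA
  have hsub : (Finset.univ.filter fun x : Fin n → F =>
      f (Function.update x a 0) ≠ f x) ⊆ Fintype.piFinset A := by
    intro x hx
    rw [Finset.mem_filter] at hx
    have hne := hx.2
    rw [hf] at hne
    set x' := Function.update x a 0 with hx'
    have hMx : ∀ i, L.M i x' = L.M i x := by
      intro i
      unfold LayeredForm.M
      refine Finset.prod_congr rfl fun v hv => ?_
      have hva : v ≠ a := fun h => haL i (h ▸ hv)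
      rw [hx', Function.update_of_ne hva]
    have hlist : (List.ofFn fun i => (L.M i x', L.B i))
        = (List.ofFn fun i => (L.M i x, L.B i)) := by
      congr 1; funext i; rw [hMx]
    have hne' : nestEval (List.ofFn fun i => (L.M i x, L.B i)) (L.PC x')
        ≠ nestEval (List.ofFn fun i => (L.M i x, L.B i)) (L.PC x) := by
      unfold LayeredForm.eval at hne
      rw [hlist] at hne
      exact hne
    obtain ⟨hPC, hmb⟩ := nestEval_ne_aux _ _ _ hne'
    have hM0 : ∀ i, L.M i x ≠ 0 := fun i =>
      hmb (L.M i x, L.B i) (List.mem_ofFn.mpr ⟨i, rfl⟩)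
    rw [Fintype.mem_piFinset]
    intro v
    rw [hA]
    dsimp only
    split_ifs with h1 h2 h3
    · obtain ⟨i, hvi⟩ := h1
      rw [Finset.mem_compl]
      intro hxv
      apply hM0 i
      unfold LayeredForm.M
      refine Finset.prod_eq_zero hvi ?_
      simp [Qt, hxv]
    · subst h2
      rw [Finset.mem_compl, Finset.mem_singleton]
      intro h0
      apply hPC
      rw [hx', ← h0, Function.update_eq_self]
    · subst h3
      rw [Finset.mem_compl]
      intro hxs
      apply hPC
      have hx's : x' v = x v := by rw [hx', Function.update_of_ne (Ne.symm has)]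
      rw [hb0.2.2 x' (hx's ▸ hxs), hb0.2.2 x hxs]
    · exact Finset.mem_univ _
  set U : Finset (Fin n) := Finset.univ.biUnion L.layer with hU
  have hmemU : ∀ v, v ∈ U ↔ ∃ i, v ∈ L.layer i := by
    intro v; rw [hU]; simp [Finset.mem_biUnion]
  have haU : a ∉ U := by rw [hmemU]; rintro ⟨i, hi⟩; exact haL i hi
  have hsU : s ∉ U := by rw [hmemU]; rintro ⟨i, hi⟩; exact hsrem i hi
  have haIns : a ∉ insert s U := by
    rw [Finset.mem_insert]; rintro (h | h); exact has h; exact haU h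
  have hUcard : U.card = ∑ i : Fin r, (L.layer i).card :=
    Finset.card_biUnion fun i _ j _ hij => L.disj i j hij
  set D : Finset (Fin n) := insert a (insert s U) with hD
  have hDcard : D.card = (∑ i : Fin r, (L.layer i).card) + 2 := by
    rw [hD, Finset.card_insert_of_notMem haIns, Finset.card_insert_of_notMem hsU, hUcard]
  have hcompl : ∀ v ∈ Dᶜ, (A v).card = Fintype.card F := by
    intro v hv
    rw [Finset.mem_compl, hD] at hv
    simp only [Finset.mem_insert] at hv
    push_neg at hv
    obtain ⟨hva, hvs, hvU⟩ := hv
    have hvL : ¬ ∃ i, v ∈ L.layer i := fun h => hvU ((hmemU v).mpr h)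
    rw [hA]
    simp [hvL, hva, hvs]
  have hAa : (A a).card = Fintype.card F - 1 := by
    have : ¬ ∃ i, a ∈ L.layer i := fun ⟨i, hi⟩ => haL i hi
    rw [hA]
    dsimp only
    rw [if_neg this, if_pos rfl, Finset.card_compl, Finset.card_singleton]
  have hAs : (A s).card = Fintype.card F - Ss.card := by
    have h1 : ¬ ∃ i, s ∈ L.layer i := fun ⟨i, hi⟩ => hsrem i hi
    rw [hA]
    dsimp only
    rw [if_neg h1, if_neg (Ne.symm has), if_pos rfl, Finset.card_compl]
  have hAU : ∀ i : Fin r, ∀ v ∈ L.layer i, (A v).card = Fintype.card F - (L.S v).card := by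
    intro i v hv
    rw [hA]
    dsimp only
    rw [if_pos (⟨i, hv⟩ : ∃ i, v ∈ L.layer i), Finset.card_compl]
  calc chCount f a 0 ≤ (Fintype.piFinset A).card := Finset.card_le_card hsub
    _ = ∏ v, (A v).card := Fintype.card_piFinset A
    _ = (∏ v ∈ D, (A v).card) * ∏ v ∈ Dᶜ, (A v).card :=
        (Finset.prod_mul_prod_compl D _).symm
    _ = Fintype.card F ^ (n - (∑ i : Fin r, (L.layer i).card) - 2) *
        (∏ i : Fin r, ∏ v ∈ L.layer i, (Fintype.card F - (L.S v).card)) *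
        (Fintype.card F - Ss.card) * (Fintype.card F - 1) := by
        have hUprod : ∏ v ∈ U, (A v).card
            = ∏ i : Fin r, ∏ v ∈ L.layer i, (Fintype.card F - (L.S v).card) := by
          rw [hU, Finset.prod_biUnion (fun i _ j _ hij => L.disj i j hij)]
          exact Finset.prod_congr rfl fun i _ =>
            Finset.prod_congr rfl fun v hv => hAU i v hv
        rw [Finset.prod_congr rfl hcompl, Finset.prod_const]
        rw [Finset.card_compl, hDcard]
        rw [hD, Finset.prod_insert haIns, Finset.prod_insert hsU, hAa, hAs, hUprod]
        rw [Fintype.card_fin, ← Nat.sub_sub]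
        ring
end

section
/- Let f : F^n → F be in layered canalizing form with r layers of sizes k_1, …, k_r, canalizing depth d, and canalizing input sets S_{i,j}, and suppose the core function P_C has exactly c ≥ 1 canalizing variables x_{s_1}, …, x_{s_c} with canalizing input sets S_{s_1}, …, S_{s_c} (but P_C is not 1-canalizing). If x_a is a variable in the support of P_C that is not canalizing for P_C, then the number of transitions changed by deleting x_a satisfies #{x ∈ F^n : f(x_1, …, x_{a−1}, 0, x_{a+1}, …, x_n) ≠ f(x)} ≤ p^{n − d − c − 1} · (∏_{i=1}^{r} ∏_{j=1}^{k_i} (p − |S_{i,j}|)) · (∏_{i=1}^{c} (p − |S_{s_i}|)) · (p − 1). -/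
open Finset

lemma nestEval_ne {F : Type*} [Field F] :
    ∀ (l : List (F × F)) (P P' : F), nestEval l P ≠ nestEval l P' →
      P ≠ P' ∧ ∀ q ∈ l, q.1 ≠ 0
  | [], P, P', h => ⟨h, by simp⟩
  | (m, b) :: t, P, P', h => by
    simp only [nestEval] at h
    have hm : m ≠ 0 := by rintro rfl; simp at h
    have ht : nestEval t P ≠ nestEval t P' := fun he => h (by rw [he])
    obtain ⟨h1, h2⟩ := nestEval_ne t P P' ht
    refine ⟨h1, ?_⟩
    intro q hq
    rcases List.mem_cons.mp hq with hq | hq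
    · subst hq; exact hm
    · exact h2 q hq

/-- Edge-deletion bound for a non-canalizing variable `a` in the support of
a core function `P_C` having exactly `c ≥ 1` canalizing variables `x_{s₁}, …, x_{s_c}`
with canalizing input sets `S_{s₁}, …, S_{s_c}` (but `P_C` not 1-canalizing). -/
theorem stmt14 {F : Type*} [Field F] [Fintype F] [DecidableEq F] {n r c : ℕ} (hc : 1 ≤ c)
    (f : (Fin n → F) → F) (L : LayeredForm F n r) (hf : f = L.eval)
    (sv : Fin c → Fin n) (hinj : Function.Injective sv)
    (hrem : ∀ j : Fin c, ∀ i : Fin r, sv j ∉ L.layer i)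
    (Ss : Fin c → Finset F)
    (hcan : ∀ j : Fin c, ∃ b : F, Canalizing n L.PC (sv j) (Ss j) b)
    (hexact : ∀ v : Fin n, DependsOnVar n L.PC v →
      (∃ (S' : Finset F) (b : F), Canalizing n L.PC v S' b) → ∃ j : Fin c, sv j = v)
    (a : Fin n) (hadep : DependsOnVar n L.PC a)
    (hanc : ¬ ∃ (S' : Finset F) (b : F), Canalizing n L.PC a S' b) :
    chCount f a 0 ≤
      Fintype.card F ^ (n - (∑ i : Fin r, (L.layer i).card) - c - 1) *
        (∏ i : Fin r, ∏ v ∈ L.layer i, (Fintype.card F - (L.S v).card)) *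
        (∏ j : Fin c, (Fintype.card F - (Ss j).card)) * (Fintype.card F - 1) := by
  classical
  subst hf
  have haL : ∀ i : Fin r, a ∉ L.layer i := fun i hi => (L.PCvars i a hi) hadep
  have hasv : ∀ j : Fin c, sv j ≠ a := by
    intro j h
    obtain ⟨b, hb⟩ := hcan j
    exact hanc ⟨Ss j, b, h ▸ hb⟩
  set A : Finset (Fin n) := Finset.univ.biUnion L.layer with hA
  have haA : a ∉ A := by
    simp only [hA, Finset.mem_biUnion]
    rintro ⟨i, -, hi⟩
    exact haL i hi
  set Bs : Finset (Fin n) := Finset.image sv Finset.univ with hBs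
  have haBs : a ∉ Bs := by
    simp only [hBs, Finset.mem_image]
    rintro ⟨j, -, hj⟩
    exact hasv j hj
  have hsvA : ∀ j : Fin c, sv j ∉ A := by
    intro j hj
    obtain ⟨i, -, hi⟩ := Finset.mem_biUnion.mp hj
    exact hrem j i hi
  have hdisjAB : Disjoint A Bs := by
    rw [Finset.disjoint_right]
    intro v hv
    obtain ⟨j, -, hj⟩ := Finset.mem_image.mp hv
    exact hj ▸ hsvA j
  -- key extraction
  have key : ∀ x : Fin n → F,
      L.eval (Function.update x a 0) ≠ L.eval x →
      (∀ v ∈ A, x v ∉ L.S v) ∧ (∀ j : Fin c, x (sv j) ∉ Ss j) ∧ x a ≠ 0 := by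
    intro x hx
    have hMy : ∀ i, L.M i (Function.update x a 0) = L.M i x := by
      intro i
      unfold LayeredForm.M
      refine Finset.prod_congr rfl fun v hv => ?_
      rw [Function.update_of_ne (fun h : v = a => haL i (h ▸ hv))]
    have hlist : (List.ofFn fun i => (L.M i (Function.update x a 0), L.B i))
        = List.ofFn fun i => (L.M i x, L.B i) := by
      congr 1; funext i; rw [hMy i]
    rw [LayeredForm.eval, LayeredForm.eval, hlist] at hx
    obtain ⟨hPC, hM⟩ := nestEval_ne _ _ _ hx
    have hMne : ∀ i, L.M i x ≠ 0 := fun i =>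
      hM (L.M i x, L.B i) (by rw [List.mem_ofFn]; exact ⟨i, rfl⟩)
    refine ⟨?_, ?_, ?_⟩
    · intro v hv hmem
      obtain ⟨i, -, hvi⟩ := Finset.mem_biUnion.mp hv
      apply hMne i
      unfold LayeredForm.M
      exact Finset.prod_eq_zero hvi (by simp [Qt, hmem])
    · intro j hmem
      obtain ⟨b, -, -, hb⟩ := hcan j
      apply hPC
      rw [hb _ (by rwa [Function.update_of_ne (hasv j)]), hb x hmem]
    · intro h0
      apply hPC
      rw [show Function.update x a 0 = x from by
        rw [← h0]; exact Function.update_eq_self a x]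
  set T : Fin n → Finset F := fun v =>
    if v = a then ({0}ᶜ : Finset F)
    else if v ∈ A then (L.S v)ᶜ
    else if h : ∃ j, sv j = v then (Ss h.choose)ᶜ
    else Finset.univ with hT
  have hTa : T a = ({0}ᶜ : Finset F) := by simp only [hT, if_pos rfl]
  have hTA : ∀ v ∈ A, T v = (L.S v)ᶜ := by
    intro v hv
    have hva : v ≠ a := fun h => haA (h ▸ hv)
    simp only [hT, if_neg hva, if_pos hv]
  have hTB : ∀ j : Fin c, T (sv j) = (Ss j)ᶜ := by
    intro j
    have h1 : sv j ≠ a := hasv j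
    have h3 : ∃ j', sv j' = sv j := ⟨j, rfl⟩
    have h4 : h3.choose = j := hinj h3.choose_spec
    simp only [hT, if_neg h1, if_neg (hsvA j), dif_pos h3, h4]
  have hTrest : ∀ v : Fin n, v ∉ A → v ∉ Bs → v ≠ a → T v = Finset.univ := by
    intro v h1 h2 h3
    have h4 : ¬ ∃ j, sv j = v := by
      rintro ⟨j, hj⟩
      exact h2 (hj ▸ Finset.mem_image_of_mem sv (Finset.mem_univ j))
    simp only [hT, if_neg h3, if_neg h1, dif_neg h4]
  -- subset
  have hsub : (Finset.univ.filter fun x : Fin n → F =>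
      L.eval (Function.update x a 0) ≠ L.eval x) ⊆ Fintype.piFinset T := by
    intro x hx
    rw [Finset.mem_filter] at hx
    obtain ⟨hA', hB', ha'⟩ := key x hx.2
    rw [Fintype.mem_piFinset]
    intro v
    by_cases h1 : v = a
    · subst h1; rw [hTa]; simpa using ha'
    · by_cases h2 : v ∈ A
      · rw [hTA v h2, Finset.mem_compl]; exact hA' v h2
      · by_cases h3 : ∃ j, sv j = v
        · obtain ⟨j, hj⟩ := h3
          subst hj
          rw [hTB j, Finset.mem_compl]; exact hB' j
        · rw [hTrest v h2 (by
            rintro hv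
            obtain ⟨j, -, hj⟩ := Finset.mem_image.mp hv
            exact h3 ⟨j, hj⟩) h1]
          exact Finset.mem_univ _
  -- cardinality computation
  set U : Finset (Fin n) := (A ∪ Bs) ∪ {a} with hU
  have hdAB_a : Disjoint (A ∪ Bs) ({a} : Finset (Fin n)) := by
    rw [Finset.disjoint_singleton_right, Finset.mem_union]
    rintro (h | h)
    exacts [haA h, haBs h]
  have hpd : (↑(Finset.univ : Finset (Fin r)) : Set (Fin r)).PairwiseDisjoint L.layer :=
    fun i _ j _ hij => L.disj i j hij
  have hAcard : A.card = ∑ i : Fin r, (L.layer i).card :=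
    Finset.card_biUnion fun i _ j _ hij => L.disj i j hij
  have hBcard : Bs.card = c := by
    rw [hBs, Finset.card_image_of_injective _ hinj, Finset.card_univ, Fintype.card_fin]
  have hUcard : U.card = (∑ i : Fin r, (L.layer i).card) + c + 1 := by
    rw [hU, Finset.card_union_of_disjoint hdAB_a, Finset.card_union_of_disjoint hdisjAB,
      hAcard, hBcard, Finset.card_singleton]
  have hprodA : ∏ v ∈ A, (T v).card
      = ∏ i : Fin r, ∏ v ∈ L.layer i, (Fintype.card F - (L.S v).card) := by
    rw [hA, Finset.prod_biUnion hpd]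
    refine Finset.prod_congr rfl fun i _ => Finset.prod_congr rfl fun v hv => ?_
    rw [hTA v (Finset.mem_biUnion.mpr ⟨i, Finset.mem_univ i, hv⟩), Finset.card_compl]
  have hprodB : ∏ v ∈ Bs, (T v).card = ∏ j : Fin c, (Fintype.card F - (Ss j).card) := by
    rw [hBs, Finset.prod_image (fun j _ j' _ h => hinj h)]
    refine Finset.prod_congr rfl fun j _ => ?_
    rw [hTB j, Finset.card_compl]
  have hTacard : (T a).card = Fintype.card F - 1 := by
    rw [hTa, Finset.card_compl, Finset.card_singleton]
  have hprodRest : ∏ v ∈ Uᶜ, (T v).card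
      = Fintype.card F ^ (n - ((∑ i : Fin r, (L.layer i).card) + c + 1)) := by
    rw [Finset.prod_congr rfl (fun v hv => ?_), Finset.prod_const, Finset.card_compl,
      hUcard, Fintype.card_fin]
    rw [Finset.mem_compl, hU, Finset.mem_union, Finset.mem_union,
      Finset.mem_singleton] at hv
    push_neg at hv
    rw [hTrest v hv.1.1 hv.1.2 hv.2, Finset.card_univ]
  have hfull : ∏ v : Fin n, (T v).card
      = (∏ i : Fin r, ∏ v ∈ L.layer i, (Fintype.card F - (L.S v).card)) *
        (∏ j : Fin c, (Fintype.card F - (Ss j).card)) * (Fintype.card F - 1) *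
        Fintype.card F ^ (n - ((∑ i : Fin r, (L.layer i).card) + c + 1)) := by
    rw [← Finset.prod_mul_prod_compl U fun v => (T v).card, hprodRest]
    rw [hU, Finset.prod_union hdAB_a, Finset.prod_union hdisjAB,
      Finset.prod_singleton, hprodA, hprodB, hTacard]
  have hexp : n - (∑ i : Fin r, (L.layer i).card) - c - 1
      = n - ((∑ i : Fin r, (L.layer i).card) + c + 1) := by omega
  calc chCount L.eval a 0
      ≤ (Fintype.piFinset T).card := Finset.card_le_card hsub
    _ = ∏ v : Fin n, (T v).card := Fintype.card_piFinset T
    _ = _ := by rw [hfull, hexp]; ring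
end

section
/- Let f : F^n → F be of the form f(x) = M · g(x_other) + B, where M = ∏_{j=1}^{k} Q̃_{S_j}(x_{i_j}) is a product of complement indicators over distinct variables x_{i_1}, …, x_{i_k} with nonempty proper sets S_1, …, S_k ⊆ F, g is a function of the remaining n − k variables, and B ∈ F. Let x_s = x_{i_{j_0}} be one of these canalizing variables. If x ∈ F^n satisfies f(x_1, …, x_{s−1}, 0, x_{s+1}, …, x_n) ≠ f(x), then x_{i_j} ∉ S_j for every j ≠ j_0; moreover, if 0 ∈ S_{j_0} then additionally x_s ∉ S_{j_0}, and if 0 ∉ S_{j_0} then additionally x_s ∈ S_{j_0}. Consequently #{x ∈ F^n : f(x|x_s ← 0) ≠ f(x)} ≤ p^{n−k} · (∏_{j ≠ j_0} (p − |S_j|)) · (p − R), where R = |S_{j_0}| if 0 ∈ S_{j_0} and R = p − |S_{j_0}| if 0 ∉ S_{j_0}. -/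
open Finset

/-- For `f = M · g + B` with `M` a product of complement indicators over
distinct canalizing variables, any state changed by deleting the canalizing variable
`x_{i_{j₀}}` has all other canalizing variables outside their canalizing sets, and
`x_{i_{j₀}}` outside (resp. inside) `S_{j₀}` according to whether `0 ∈ S_{j₀}`;
consequently the stated counting bound holds. -/
theorem stmt16 {F : Type*} [Field F] [Fintype F] [DecidableEq F] {n k : ℕ}
    (idx : Fin k → Fin n) (hinj : Function.Injective idx)
    (S : Fin k → Finset F) (hSne : ∀ j : Fin k, (S j).Nonempty)
    (hSpr : ∀ j : Fin k, S j ≠ Finset.univ)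
    (g : (Fin n → F) → F)
    (hg : ∀ x y : Fin n → F, (∀ v : Fin n, (∀ j : Fin k, idx j ≠ v) → x v = y v) → g x = g y)
    (B : F) (f : (Fin n → F) → F)
    (hf : ∀ x : Fin n → F, f x = (∏ j : Fin k, Qt (S j) (x (idx j))) * g x + B)
    (j0 : Fin k) :
    (∀ x : Fin n → F, f (Function.update x (idx j0) 0) ≠ f x →
      (∀ j : Fin k, j ≠ j0 → x (idx j) ∉ S j) ∧
      ((0 : F) ∈ S j0 → x (idx j0) ∉ S j0) ∧
      ((0 : F) ∉ S j0 → x (idx j0) ∈ S j0)) ∧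
    chCount f (idx j0) 0 ≤
      Fintype.card F ^ (n - k) *
        (∏ j ∈ Finset.univ.erase j0, (Fintype.card F - (S j).card)) *
        (Fintype.card F -
          if (0 : F) ∈ S j0 then (S j0).card else Fintype.card F - (S j0).card) := by

  classical
  have key : ∀ x : Fin n → F, f (Function.update x (idx j0) 0) ≠ f x →
      (∀ j : Fin k, j ≠ j0 → x (idx j) ∉ S j) ∧
      ((0 : F) ∈ S j0 → x (idx j0) ∉ S j0) ∧
      ((0 : F) ∉ S j0 → x (idx j0) ∈ S j0) := by
    intro x hx
    have hgx : g (Function.update x (idx j0) 0) = g x := by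
      apply hg
      intro v hv
      exact Function.update_of_ne (Ne.symm (hv j0)) _ _
    have hprod : (∏ j : Fin k, Qt (S j) (Function.update x (idx j0) 0 (idx j))) ≠
        ∏ j : Fin k, Qt (S j) (x (idx j)) := by
      intro h
      apply hx
      rw [hf, hf, hgx, h]
    have hup : ∀ j : Fin k, j ≠ j0 →
        Function.update x (idx j0) 0 (idx j) = x (idx j) := by
      intro j hj
      exact Function.update_of_ne (fun h => hj (hinj h)) _ _
    have hup0 : Function.update x (idx j0) 0 (idx j0) = 0 := Function.update_self _ _ _
    have h1 : ∀ j : Fin k, j ≠ j0 → x (idx j) ∉ S j := by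
      intro j hj hmem
      apply hprod
      have hz : Qt (S j) (x (idx j)) = 0 := if_pos hmem
      rw [Finset.prod_eq_zero (Finset.mem_univ j), Finset.prod_eq_zero (Finset.mem_univ j) hz]
      rw [hup j hj]; exact hz
    refine ⟨h1, ?_, ?_⟩
    · intro h0 hmem
      apply hprod
      rw [Finset.prod_eq_zero (Finset.mem_univ j0), Finset.prod_eq_zero (Finset.mem_univ j0)]
      · exact if_pos hmem
      · rw [hup0]; exact if_pos h0
    · intro h0
      by_contra hmem
      apply hprod
      apply Finset.prod_congr rfl
      intro j _
      by_cases hj : j = j0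
      · subst hj
        rw [hup0]
        simp [Qt, h0, hmem]
      · rw [hup j hj]
  refine ⟨key, ?_⟩
  set p := Fintype.card F with hp
  set A : Fin k → Finset F := fun j =>
    if j = j0 then (if (0 : F) ∈ S j0 then (S j0)ᶜ else S j0) else (S j)ᶜ with hA
  have hsub : (Finset.univ.filter fun x : Fin n → F =>
      f (Function.update x (idx j0) 0) ≠ f x) ⊆
      Finset.univ.filter fun x : Fin n → F => ∀ j : Fin k, x (idx j) ∈ A j := by
    intro x hx
    rw [Finset.mem_filter] at hx ⊢
    refine ⟨Finset.mem_univ _, ?_⟩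
    obtain ⟨ha, hb, hc⟩ := key x hx.2
    intro j
    by_cases hj : j = j0
    · subst hj
      simp only [hA, if_pos rfl]
      by_cases h0 : (0 : F) ∈ S j
      · rw [if_pos h0, Finset.mem_compl]; exact hb h0
      · rw [if_neg h0]; exact hc h0
    · simp only [hA, if_neg hj, Finset.mem_compl]; exact ha j hj
  set Bv : Fin n → Finset F := fun v =>
    Finset.univ.filter (fun a : F => ∀ j : Fin k, idx j = v → a ∈ A j) with hBv
  have hset : (Finset.univ.filter fun x : Fin n → F => ∀ j : Fin k, x (idx j) ∈ A j) =
      Fintype.piFinset Bv := by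
    ext x
    simp only [Finset.mem_filter, Finset.mem_univ, true_and, Fintype.mem_piFinset, hBv]
    constructor
    · intro h v
      intro j hj
      subst hj; exact h j
    · intro h j
      have := h (idx j)
      exact this j rfl
  have hBvidx : ∀ j : Fin k, Bv (idx j) = A j := by
    intro j
    ext a
    simp only [hBv, Finset.mem_filter, Finset.mem_univ, true_and]
    constructor
    · intro h; exact h j rfl
    · intro ha j' hj'
      rw [hinj hj']; exact ha
  have hBvout : ∀ v : Fin n, (∀ j : Fin k, idx j ≠ v) → Bv v = Finset.univ := by
    intro v hv
    ext a
    simp only [hBv, Finset.mem_filter, Finset.mem_univ, true_and, iff_true]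
    intro j hj
    exact absurd hj (hv j)
  have hcard : (Fintype.piFinset Bv).card = p ^ (n - k) * ∏ j : Fin k, (A j).card := by
    rw [Fintype.card_piFinset]
    have hsplit : (∏ v ∈ Finset.univ.image idx, (Bv v).card) *
        ∏ v ∈ (Finset.univ.image idx)ᶜ, (Bv v).card = ∏ v : Fin n, (Bv v).card :=
      Finset.prod_mul_prod_compl _ _
    rw [← hsplit]
    have h1 : (∏ v ∈ Finset.univ.image idx, (Bv v).card) = ∏ j : Fin k, (A j).card := by
      rw [Finset.prod_image (fun a _ b _ h => hinj h)]
      exact Finset.prod_congr rfl (fun j _ => by rw [hBvidx j])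
    have h2 : (∏ v ∈ (Finset.univ.image idx)ᶜ, (Bv v).card) = p ^ (n - k) := by
      rw [Finset.prod_congr rfl (fun v hv => ?_), Finset.prod_const]
      · congr 1
        rw [Finset.card_compl, Finset.card_image_of_injective _ hinj]
        simp [hp]
      · have hvo : ∀ j : Fin k, idx j ≠ v := by
          intro j hj
          rw [Finset.mem_compl] at hv
          exact hv (Finset.mem_image.mpr ⟨j, Finset.mem_univ j, hj⟩)
        rw [hBvout v hvo, Finset.card_univ]
    rw [h1, h2, mul_comm]
  have hAcard : ∀ j : Fin k, j ≠ j0 → (A j).card = p - (S j).card := by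
    intro j hj
    simp only [hA, if_neg hj, Finset.card_compl, hp]
  have hAj0 : (A j0).card =
      p - (if (0 : F) ∈ S j0 then (S j0).card else p - (S j0).card) := by
    simp only [hA, if_pos rfl]
    by_cases h0 : (0 : F) ∈ S j0
    · rw [if_pos h0, if_pos h0, Finset.card_compl]
    · rw [if_neg h0, if_neg h0, Nat.sub_sub_self (Finset.card_le_univ _)]
  calc chCount f (idx j0) 0
      ≤ (Finset.univ.filter fun x : Fin n → F => ∀ j : Fin k, x (idx j) ∈ A j).card :=
        Finset.card_le_card hsub
    _ = p ^ (n - k) * ∏ j : Fin k, (A j).card := by rw [hset, hcard]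
    _ = p ^ (n - k) * ((A j0).card * ∏ j ∈ Finset.univ.erase j0, (A j).card) := by
        rw [← Finset.mul_prod_erase _ (fun j => (A j).card) (Finset.mem_univ j0)]
    _ = p ^ (n - k) * (∏ j ∈ Finset.univ.erase j0, (p - (S j).card)) *
        (p - if (0 : F) ∈ S j0 then (S j0).card else p - (S j0).card) := by
        rw [Finset.prod_congr rfl (fun j hj => hAcard j (Finset.ne_of_mem_erase hj)), hAj0]
        ring
end
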